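/- arXiv:1104.5401 — 2 statements merged into one kernel-verified Lean document; each statement's English description precedes it below -/
import Mathlib

section
/- Let r ≥ 1, let 0 < p < 1, and let 𝒫 be a hereditary property of r-graphs such that 𝒫ⁿ is nonempty for every n. For each n define c_n by Pr[G(n,p) ∈ 𝒫ⁿ] = 2^{-c_n · C(n,r)}, where C(n,r) denotes the binomial coefficient. Then the limit lim_{n→∞} c_n exists (as a finite real number). -/
open Finset

/-- The set of all potential edges of an `r`-uniform hypergraph on vertex set `Fin n`:
the `r`-element subsets of the vertex set. -/
def edgeUniv (r n : ℕ) : Finset (Finset (Fin n)) := Finset.powersetCard r Finset.univ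

/-- `G` is an `r`-uniform hypergraph on `Fin n`: a set of `r`-element subsets of the vertices. -/
def IsRGraph (r n : ℕ) (G : Finset (Finset (Fin n))) : Prop := G ⊆ edgeUniv r n

/-- The probability that the random `r`-graph `G(n,p)` (each `r`-set being an edge
independently with probability `p`) belongs to the collection `A`. -/
noncomputable def prG (r n : ℕ) (p : ℝ) (A : Set (Finset (Finset (Fin n)))) : ℝ :=
  ∑ E ∈ (edgeUniv r n).powerset,
    Set.indicator A (fun E => p ^ E.card * (1 - p) ^ ((edgeUniv r n).card - E.card)) E

/-- The `r`-graph `F` on `Fin k` appears as an induced subgraph of `G` (an `r`-graph on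
`Fin n`) on the vertex subset `U`. -/
def IsInducedCopyAt (r k n : ℕ) (F : Finset (Finset (Fin k)))
    (G : Finset (Finset (Fin n))) (U : Finset (Fin n)) : Prop :=
  ∃ f : Fin k ↪ Fin n, Finset.univ.map f = U ∧
    ∀ e : Finset (Fin k), e.card = r → (e ∈ F ↔ e.map f ∈ G)

/-- `G` has an induced subgraph on the vertex subset `U` isomorphic to a member of the
family `Fam` (where `Fam k` is the set of members of the family on `k` vertices). -/
def HasCopyAt (r n : ℕ) (Fam : ∀ k, Set (Finset (Finset (Fin k))))
    (G : Finset (Finset (Fin n))) (U : Finset (Fin n)) : Prop :=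
  ∃ k, ∃ H ∈ Fam k, IsInducedCopyAt r k n H G U

/-- `Forb(Fam)ⁿ` : the `r`-graphs on `n` vertices with no induced subgraph isomorphic to a
member of `Fam`. -/
def ForbN (r : ℕ) (Fam : ∀ k, Set (Finset (Finset (Fin k)))) (n : ℕ) :
    Set (Finset (Finset (Fin n))) :=
  {G | IsRGraph r n G ∧ ∀ U, ¬ HasCopyAt r n Fam G U}

/-- A partial Steiner system with parameters `(r,m,n)`: a collection of `m`-element
subsets of `Fin n` such that every `r`-element subset is contained in at most one member. -/
def IsSteiner (r m n : ℕ) (D : Finset (Finset (Fin n))) : Prop :=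
  (∀ B ∈ D, B.card = m) ∧
  ∀ e : Finset (Fin n), e.card = r →
    ∀ B₁ ∈ D, ∀ B₂ ∈ D, e ⊆ B₁ → e ⊆ B₂ → B₁ = B₂


set_option linter.unusedSectionVars false
set_option linter.unusedVariables false
set_option linter.deprecated false

namespace BT2

variable {ι : Type*} [DecidableEq ι]

noncomputable def pm (p : ℝ) (E : Finset ι) (A : Finset (Finset ι)) : ℝ :=
  ∑ F ∈ A, p ^ F.card * (1 - p) ^ (E.card - F.card)

lemma pm_nonneg {p : ℝ} (hp0 : 0 ≤ p) (hp1 : p ≤ 1) (E : Finset ι) (A : Finset (Finset ι)) :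
    0 ≤ pm p E A :=
  Finset.sum_nonneg fun F _ => mul_nonneg (pow_nonneg hp0 _) (pow_nonneg (by linarith) _)

lemma pm_mono {p : ℝ} (hp0 : 0 ≤ p) (hp1 : p ≤ 1) (E : Finset ι) {A B : Finset (Finset ι)}
    (h : A ⊆ B) : pm p E A ≤ pm p E B :=
  Finset.sum_le_sum_of_subset_of_nonneg h fun F _ _ =>
    mul_nonneg (pow_nonneg hp0 _) (pow_nonneg (by linarith) _)

lemma pm_split {p : ℝ} (e : ι) (E' : Finset ι) (he : e ∉ E') (A : Finset (Finset ι))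
    (hA : A ⊆ (insert e E').powerset) :
    pm p (insert e E') A =
      (1 - p) * pm p E' (A.filter (fun F => e ∉ F)) +
      p * pm p E' ((A.filter (fun F => e ∈ F)).image (fun F => F.erase e)) := by
  have hcard : (insert e E').card = E'.card + 1 := Finset.card_insert_of_notMem he
  have h0 : ∀ F ∈ A.filter (fun F => e ∉ F),
      p ^ F.card * (1 - p) ^ ((insert e E').card - F.card)
        = (1 - p) * (p ^ F.card * (1 - p) ^ (E'.card - F.card)) := by
    intro F hF
    rw [Finset.mem_filter] at hF
    have hFE : F ⊆ E' := by
      intro x hx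
      rcases Finset.mem_insert.mp (Finset.mem_powerset.mp (hA hF.1) hx) with h | h
      · exact absurd (h ▸ hx) hF.2
      · exact h
    have hle : F.card ≤ E'.card := Finset.card_le_card hFE
    rw [hcard]
    have h4 : E'.card + 1 - F.card = (E'.card - F.card) + 1 := by omega
    rw [h4, pow_succ]
    ring
  have h1 : ∑ F ∈ A.filter (fun F => e ∈ F),
      p ^ F.card * (1 - p) ^ ((insert e E').card - F.card)
      = p * pm p E' ((A.filter (fun F => e ∈ F)).image (fun F => F.erase e)) := by
    rw [pm, Finset.sum_image (by
      intro F₁ h₁ F₂ h₂ hF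
      rw [Finset.mem_coe, Finset.mem_filter] at h₁ h₂
      rw [← Finset.insert_erase h₁.2, ← Finset.insert_erase h₂.2, show F₁.erase e = F₂.erase e from hF])]
    rw [Finset.mul_sum]
    refine Finset.sum_congr rfl ?_
    intro F hF
    rw [Finset.mem_filter] at hF
    obtain ⟨k, hk⟩ : ∃ k, F.card = k + 1 :=
      ⟨F.card - 1, by have := Finset.card_pos.mpr ⟨e, hF.2⟩; omega⟩
    rw [Finset.card_erase_of_mem hF.2, hcard, hk]
    simp only [Nat.add_sub_cancel, Nat.succ_sub_succ, Nat.sub_zero]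
    rw [pow_succ]
    ring
  rw [pm, ← Finset.sum_filter_add_sum_filter_not A (fun F => e ∈ F), h1]
  have h2 : ∑ F ∈ A.filter (fun F => ¬ e ∈ F),
      p ^ F.card * (1 - p) ^ ((insert e E').card - F.card)
      = (1 - p) * pm p E' (A.filter fun F => e ∉ F) := by
    rw [pm, Finset.mul_sum]
    exact Finset.sum_congr rfl h0
  rw [h2]; ring


lemma gm_add {κ : Type*} (T : Finset κ) (hT : T.Nonempty) (x y : κ → ℝ)
    (hx : ∀ v ∈ T, 0 ≤ x v) (hy : ∀ v ∈ T, 0 ≤ y v) :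
    (∏ v ∈ T, x v) ^ (1 / (T.card : ℝ)) + (∏ v ∈ T, y v) ^ (1 / (T.card : ℝ))
      ≤ (∏ v ∈ T, (x v + y v)) ^ (1 / (T.card : ℝ)) := by
  have htpos : (0 : ℝ) < T.card := by exact_mod_cast Finset.card_pos.mpr hT
  have hw : (1 / (T.card : ℝ)) ≠ 0 := by positivity
  by_cases hz : ∃ v ∈ T, x v + y v = 0
  · obtain ⟨v, hv, hv0⟩ := hz
    have hx0 : x v = 0 := le_antisymm (by nlinarith [hx v hv, hy v hv]) (hx v hv)
    have hy0 : y v = 0 := le_antisymm (by nlinarith [hx v hv, hy v hv]) (hy v hv)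
    have h1 : (∏ v ∈ T, x v) = 0 := Finset.prod_eq_zero hv hx0
    have h2 : (∏ v ∈ T, y v) = 0 := Finset.prod_eq_zero hv hy0
    rw [h1, h2, Real.zero_rpow hw]
    have : (0:ℝ) ≤ (∏ v ∈ T, (x v + y v)) ^ (1 / (T.card : ℝ)) :=
      Real.rpow_nonneg (Finset.prod_nonneg fun v hv => by
        have := hx v hv; have := hy v hv; linarith) _
    linarith
  · push_neg at hz
    have hs : ∀ v ∈ T, 0 < x v + y v := fun v hv =>
      lt_of_le_of_ne (by have := hx v hv; have := hy v hv; linarith) (Ne.symm (hz v hv))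
    have hwsum : ∑ _v ∈ T, (1 / (T.card : ℝ)) = 1 := by
      rw [Finset.sum_const, nsmul_eq_mul]
      field_simp
    have hP : (0:ℝ) < (∏ v ∈ T, (x v + y v)) ^ (1 / (T.card : ℝ)) :=
      Real.rpow_pos_of_pos (Finset.prod_pos hs) _
    have hx' := Real.geom_mean_le_arith_mean_weighted T (fun _ => 1 / (T.card : ℝ))
      (fun v => x v / (x v + y v)) (fun _ _ => by positivity) hwsum
      (fun v hv => div_nonneg (hx v hv) (hs v hv).le)
    have hy' := Real.geom_mean_le_arith_mean_weighted T (fun _ => 1 / (T.card : ℝ))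
      (fun v => y v / (x v + y v)) (fun _ _ => by positivity) hwsum
      (fun v hv => div_nonneg (hy v hv) (hs v hv).le)
    have hxprod : (∏ v ∈ T, (x v / (x v + y v)) ^ (1 / (T.card : ℝ)))
        = (∏ v ∈ T, x v) ^ (1 / (T.card : ℝ)) / (∏ v ∈ T, (x v + y v)) ^ (1 / (T.card : ℝ)) := by
      rw [Real.finset_prod_rpow T _ (fun v hv => div_nonneg (hx v hv) (hs v hv).le),
        Finset.prod_div_distrib,
        Real.div_rpow (Finset.prod_nonneg hx) (Finset.prod_nonneg fun v hv => (hs v hv).le)]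
    have hyprod : (∏ v ∈ T, (y v / (x v + y v)) ^ (1 / (T.card : ℝ)))
        = (∏ v ∈ T, y v) ^ (1 / (T.card : ℝ)) / (∏ v ∈ T, (x v + y v)) ^ (1 / (T.card : ℝ)) := by
      rw [Real.finset_prod_rpow T _ (fun v hv => div_nonneg (hy v hv) (hs v hv).le),
        Finset.prod_div_distrib,
        Real.div_rpow (Finset.prod_nonneg hy) (Finset.prod_nonneg fun v hv => (hs v hv).le)]
    have hsum : (∑ v ∈ T, (1 / (T.card : ℝ)) * (x v / (x v + y v)))
        + ∑ v ∈ T, (1 / (T.card : ℝ)) * (y v / (x v + y v)) = 1 := by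
      rw [← Finset.sum_add_distrib, ← hwsum]
      refine Finset.sum_congr rfl fun v hv => ?_
      have h := (hs v hv).ne'
      rw [← mul_add, ← add_div, div_self h, mul_one, hwsum]
    have hkey : (∏ v ∈ T, x v) ^ (1 / (T.card : ℝ)) / (∏ v ∈ T, (x v + y v)) ^ (1 / (T.card : ℝ))
        + (∏ v ∈ T, y v) ^ (1 / (T.card : ℝ)) / (∏ v ∈ T, (x v + y v)) ^ (1 / (T.card : ℝ))
        ≤ 1 := by
      rw [← hxprod, ← hyprod]
      calc (∏ v ∈ T, (x v / (x v + y v)) ^ (1 / (T.card : ℝ)))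
            + ∏ v ∈ T, (y v / (x v + y v)) ^ (1 / (T.card : ℝ))
          ≤ (∑ v ∈ T, (1 / (T.card : ℝ)) * (x v / (x v + y v)))
            + ∑ v ∈ T, (1 / (T.card : ℝ)) * (y v / (x v + y v)) := add_le_add hx' hy'
        _ = 1 := hsum
    rw [← add_div, div_le_one hP] at hkey
    exact hkey


lemma comb {κ : Type*} {p : ℝ} (hp0 : 0 ≤ p) (hp1 : p ≤ 1) (T : Finset κ) (hT : T.Nonempty)
    (a b : κ → ℝ) (ha : ∀ v ∈ T, 0 ≤ a v) (hb : ∀ v ∈ T, 0 ≤ b v)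
    (Q : ℝ) (hQ : 0 ≤ Q) (m₀ m₁ : ℝ) (hm₀ : 0 ≤ m₀) (hm₁ : 0 ≤ m₁)
    (h₀ : m₀ ^ T.card ≤ (∏ v ∈ T, a v) * Q) (h₁ : m₁ ^ T.card ≤ (∏ v ∈ T, b v) * Q) :
    ((1 - p) * m₀ + p * m₁) ^ T.card ≤ (∏ v ∈ T, ((1 - p) * a v + p * b v)) * Q := by
  have hq : 0 ≤ 1 - p := by linarith
  have htn : T.card ≠ 0 := Finset.card_ne_zero_of_mem hT.choose_spec
  have hroot : ∀ m X : ℝ, 0 ≤ m → m ^ T.card ≤ X → m ≤ X ^ ((T.card : ℝ)⁻¹) := by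
    intro m X hm h
    have hX : 0 ≤ X := le_trans (pow_nonneg hm _) h
    have h2 := Real.rpow_le_rpow (pow_nonneg hm _) h
      (by positivity : (0:ℝ) ≤ ((T.card : ℝ))⁻¹)
    rwa [← Real.rpow_natCast m T.card, ← Real.rpow_mul hm,
      mul_inv_cancel₀ (by exact_mod_cast htn), Real.rpow_one] at h2
  have ha' : (0:ℝ) ≤ ∏ v ∈ T, a v := Finset.prod_nonneg ha
  have hb' : (0:ℝ) ≤ ∏ v ∈ T, b v := Finset.prod_nonneg hb
  -- step 1 : bound the two pieces
  have k0 : (1 - p) * m₀ ≤ ((∏ v ∈ T, ((1 - p) * a v)) * Q) ^ ((T.card : ℝ)⁻¹) := by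
    have e1 : (∏ v ∈ T, ((1 - p) * a v)) * Q = ((1-p) ^ T.card) * ((∏ v ∈ T, a v) * Q) := by
      rw [Finset.prod_mul_distrib, Finset.prod_const]
      ring
    rw [e1, Real.mul_rpow (pow_nonneg hq _) (mul_nonneg ha' hQ),
      ← Real.rpow_natCast (1-p) T.card, ← Real.rpow_mul hq,
      mul_inv_cancel₀ (by exact_mod_cast htn), Real.rpow_one]
    exact mul_le_mul_of_nonneg_left (hroot _ _ hm₀ h₀) hq
  have k1 : p * m₁ ≤ ((∏ v ∈ T, (p * b v)) * Q) ^ ((T.card : ℝ)⁻¹) := by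
    have e1 : (∏ v ∈ T, (p * b v)) * Q = (p ^ T.card) * ((∏ v ∈ T, b v) * Q) := by
      rw [Finset.prod_mul_distrib, Finset.prod_const]
      ring
    rw [e1, Real.mul_rpow (pow_nonneg hp0 _) (mul_nonneg hb' hQ),
      ← Real.rpow_natCast p T.card, ← Real.rpow_mul hp0,
      mul_inv_cancel₀ (by exact_mod_cast htn), Real.rpow_one]
    exact mul_le_mul_of_nonneg_left (hroot _ _ hm₁ h₁) hp0
  -- step 2 : gm_add
  have hgm := gm_add T hT (fun v => (1-p) * a v) (fun v => p * b v)
    (fun v hv => mul_nonneg hq (ha v hv)) (fun v hv => mul_nonneg hp0 (hb v hv))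
  rw [one_div] at hgm
  have hsplit : ∀ Z : ℝ, 0 ≤ Z →
      ((Z * Q) ^ ((T.card : ℝ)⁻¹) : ℝ) = Z ^ ((T.card : ℝ)⁻¹) * Q ^ ((T.card : ℝ)⁻¹) :=
    fun Z hZ => Real.mul_rpow hZ hQ
  have hstep : (1 - p) * m₀ + p * m₁
      ≤ ((∏ v ∈ T, ((1 - p) * a v + p * b v)) * Q) ^ ((T.card : ℝ)⁻¹) := by
    calc (1 - p) * m₀ + p * m₁
        ≤ ((∏ v ∈ T, ((1 - p) * a v)) * Q) ^ ((T.card : ℝ)⁻¹)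
          + ((∏ v ∈ T, (p * b v)) * Q) ^ ((T.card : ℝ)⁻¹) := add_le_add k0 k1
      _ = ((∏ v ∈ T, ((1 - p) * a v)) ^ ((T.card : ℝ)⁻¹)
          + (∏ v ∈ T, (p * b v)) ^ ((T.card : ℝ)⁻¹)) * Q ^ ((T.card : ℝ)⁻¹) := by
          rw [hsplit _ (Finset.prod_nonneg fun v hv => mul_nonneg hq (ha v hv)),
            hsplit _ (Finset.prod_nonneg fun v hv => mul_nonneg hp0 (hb v hv))]
          ring
      _ ≤ (∏ v ∈ T, ((1 - p) * a v + p * b v)) ^ ((T.card : ℝ)⁻¹) * Q ^ ((T.card : ℝ)⁻¹) :=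
          mul_le_mul_of_nonneg_right hgm (Real.rpow_nonneg hQ _)
      _ = _ := (hsplit _ (Finset.prod_nonneg fun v hv =>
          add_nonneg (mul_nonneg hq (ha v hv)) (mul_nonneg hp0 (hb v hv)))).symm
  have hXnn : (0:ℝ) ≤ (∏ v ∈ T, ((1 - p) * a v + p * b v)) * Q :=
    mul_nonneg (Finset.prod_nonneg fun v hv =>
      add_nonneg (mul_nonneg hq (ha v hv)) (mul_nonneg hp0 (hb v hv))) hQ
  have hfin := pow_le_pow_left₀ (add_nonneg (mul_nonneg hq hm₀) (mul_nonneg hp0 hm₁))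
    hstep T.card
  rwa [← Real.rpow_natCast (((∏ v ∈ T, ((1 - p) * a v + p * b v)) * Q) ^ ((T.card : ℝ)⁻¹))
      T.card, ← Real.rpow_mul hXnn, inv_mul_cancel₀ (by exact_mod_cast htn),
      Real.rpow_one] at hfin


lemma shearer {κ : Type*} [DecidableEq κ] {p : ℝ} (hp0 : 0 ≤ p) (hp1 : p ≤ 1)
    (t : ℕ) (ht : 1 ≤ t) (V : Finset κ) :
    ∀ (E : Finset ι) (S : κ → Finset ι), (∀ v ∈ V, S v ⊆ E) →
      (∀ e ∈ E, (V.filter fun v => e ∈ S v).card = t) →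
      ∀ A : Finset (Finset ι), A ⊆ E.powerset →
      pm p E A ^ t ≤ ∏ v ∈ V, pm p (S v) (A.image (fun F => F ∩ S v)) := by
  intro E
  induction E using Finset.induction_on with
  | empty =>
    intro S hS hcov A hA
    rw [Finset.powerset_empty] at hA
    rcases Finset.subset_singleton_iff.mp hA with rfl | rfl
    · rw [show pm p (∅ : Finset ι) ∅ = 0 from Finset.sum_empty, zero_pow (by omega)]
      exact Finset.prod_nonneg fun v _ => pm_nonneg hp0 hp1 _ _
    · have h1 : pm p (∅ : Finset ι) {∅} = 1 := by simp [pm]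
      rw [h1, one_pow]
      refine le_of_eq (Finset.prod_eq_one fun v hv => ?_).symm
      have hSv : S v = ∅ := Finset.subset_empty.mp (hS v hv)
      rw [hSv]
      have : Finset.image (fun F => F ∩ (∅ : Finset ι)) {∅} = {∅} := by simp
      rw [this]
      simp [pm]
  | @insert e E' he IH =>
    intro S hS hcov A hA
    set A₀ := A.filter (fun F => e ∉ F) with hA₀def
    set A₁ := (A.filter (fun F => e ∈ F)).image (fun F => F.erase e) with hA₁def
    set S' := fun v => (S v).erase e with hS'def
    set T := V.filter (fun v => e ∈ S v) with hTdef
    have hTcard : T.card = t := hcov e (Finset.mem_insert_self e E')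
    have hTne : T.Nonempty := Finset.card_pos.mp (by omega)
    have hA₀ : A₀ ⊆ E'.powerset := by
      intro F hF
      rw [hA₀def, Finset.mem_filter] at hF
      rw [Finset.mem_powerset]
      intro x hx
      rcases Finset.mem_insert.mp (Finset.mem_powerset.mp (hA hF.1) hx) with h | h
      · exact absurd (h ▸ hx) hF.2
      · exact h
    have hA₁ : A₁ ⊆ E'.powerset := by
      intro F hF
      rw [hA₁def, Finset.mem_image] at hF
      obtain ⟨G, hG, rfl⟩ := hF
      rw [Finset.mem_filter] at hG
      rw [Finset.mem_powerset]
      intro x hx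
      rw [Finset.mem_erase] at hx
      rcases Finset.mem_insert.mp (Finset.mem_powerset.mp (hA hG.1) hx.2) with h | h
      · exact absurd h hx.1
      · exact h
    have hS'sub : ∀ v ∈ V, S' v ⊆ E' := by
      intro v hv x hx
      rw [hS'def] at hx
      rw [Finset.mem_erase] at hx
      rcases Finset.mem_insert.mp (hS v hv hx.2) with h | h
      · exact absurd h hx.1
      · exact h
    have hcov' : ∀ e' ∈ E', (V.filter fun v => e' ∈ S' v).card = t := by
      intro e' he'
      have hne : e' ≠ e := fun h => he (h ▸ he')
      rw [← hcov e' (Finset.mem_insert_of_mem he')]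
      congr 1
      apply Finset.filter_congr
      intro v _
      simp [hS'def, Finset.mem_erase, hne]
    have IH0 := IH S' hS'sub hcov' A₀ hA₀
    have IH1 := IH S' hS'sub hcov' A₁ hA₁
    -- helper intersections
    have hinter : ∀ (F W : Finset ι), e ∉ F → F ∩ (W.erase e) = F ∩ W := by
      intro F W heF
      ext x
      simp only [Finset.mem_inter, Finset.mem_erase]
      constructor
      · rintro ⟨hxF, _, hxW⟩; exact ⟨hxF, hxW⟩
      · rintro ⟨hxF, hxW⟩
        exact ⟨hxF, fun h => heF (h ▸ hxF), hxW⟩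
    have hkey2 : ∀ (F W : Finset ι), (F.erase e) ∩ (W.erase e) = (F ∩ W).erase e := by
      intro F W
      ext x
      simp only [Finset.mem_inter, Finset.mem_erase]
      tauto
    -- split identity for v ∈ T
    have hid : ∀ v ∈ T, pm p (S v) (A.image (fun F => F ∩ S v))
        = (1 - p) * pm p (S' v) (A₀.image (fun F => F ∩ S' v))
          + p * pm p (S' v) (A₁.image (fun F => F ∩ S' v)) := by
      intro v hv
      rw [hTdef, Finset.mem_filter] at hv
      have hev : e ∈ S v := hv.2
      have heS' : e ∉ S' v := Finset.notMem_erase e (S v)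
      have hSv : S v = insert e (S' v) := (Finset.insert_erase hev).symm
      have hsub : A.image (fun F => F ∩ S v) ⊆ (insert e (S' v)).powerset := by
        rw [← hSv]
        intro G hG
        rw [Finset.mem_image] at hG
        obtain ⟨F, _, rfl⟩ := hG
        exact Finset.mem_powerset.mpr Finset.inter_subset_right
      have hsplit := pm_split (p := p) e (S' v) heS' (A.image (fun F => F ∩ S v)) hsub
      rw [← hSv] at hsplit
      rw [hsplit]
      have id1 : (A.image (fun F => F ∩ S v)).filter (fun G => e ∉ G)
          = A₀.image (fun F => F ∩ S' v) := by
        ext G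
        constructor
        · intro hGmem
          obtain ⟨hGim, hGe⟩ := Finset.mem_filter.mp hGmem
          obtain ⟨F, hFA, rfl⟩ := Finset.mem_image.mp hGim
          have heF : e ∉ F := fun h => hGe (Finset.mem_inter.mpr ⟨h, hev⟩)
          refine Finset.mem_image.mpr ⟨F, ?_, ?_⟩
          · rw [hA₀def]
            exact Finset.mem_filter.mpr ⟨hFA, heF⟩
          · show F ∩ (S v).erase e = F ∩ S v
            exact hinter F (S v) heF
        · intro hGmem
          obtain ⟨F, hFmem, rfl⟩ := Finset.mem_image.mp hGmem
          rw [hA₀def] at hFmem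
          obtain ⟨hFA, heF⟩ := Finset.mem_filter.mp hFmem
          have hEq : F ∩ S' v = F ∩ S v := hinter F (S v) heF
          refine Finset.mem_filter.mpr ⟨Finset.mem_image.mpr ⟨F, hFA, hEq.symm⟩, ?_⟩
          rw [hEq]
          exact fun h => heF (Finset.mem_inter.mp h).1
      have id2 : ((A.image (fun F => F ∩ S v)).filter (fun G => e ∈ G)).image
            (fun G => G.erase e)
          = A₁.image (fun F => F ∩ S' v) := by
        ext G
        constructor
        · intro hGmem
          obtain ⟨G', hG'mem, rfl⟩ := Finset.mem_image.mp hGmem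
          obtain ⟨hG'im, heG'⟩ := Finset.mem_filter.mp hG'mem
          obtain ⟨F, hFA, rfl⟩ := Finset.mem_image.mp hG'im
          have heF : e ∈ F := (Finset.mem_inter.mp heG').1
          refine Finset.mem_image.mpr ⟨F.erase e, ?_, ?_⟩
          · rw [hA₁def]
            exact Finset.mem_image.mpr ⟨F, Finset.mem_filter.mpr ⟨hFA, heF⟩, rfl⟩
          · show F.erase e ∩ (S v).erase e = (F ∩ S v).erase e
            exact hkey2 F (S v)
        · intro hGmem
          obtain ⟨G', hG'mem, rfl⟩ := Finset.mem_image.mp hGmem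
          rw [hA₁def] at hG'mem
          obtain ⟨F, hFmem, rfl⟩ := Finset.mem_image.mp hG'mem
          obtain ⟨hFA, heF⟩ := Finset.mem_filter.mp hFmem
          refine Finset.mem_image.mpr ⟨F ∩ S v, Finset.mem_filter.mpr
            ⟨Finset.mem_image.mpr ⟨F, hFA, rfl⟩, Finset.mem_inter.mpr ⟨heF, hev⟩⟩, ?_⟩
          show (F ∩ S v).erase e = F.erase e ∩ (S v).erase e
          exact (hkey2 F (S v)).symm
      rw [id1, id2]
    -- monotonicity for v ∉ T
    have hmono : ∀ v ∈ V, e ∉ S v →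
        (pm p (S' v) (A₀.image (fun F => F ∩ S' v)) ≤ pm p (S v) (A.image (fun F => F ∩ S v)) ∧
         pm p (S' v) (A₁.image (fun F => F ∩ S' v)) ≤ pm p (S v) (A.image (fun F => F ∩ S v))) := by
      intro v hv hev
      have hSv : S' v = S v := Finset.erase_eq_of_notMem hev
      rw [hSv]
      constructor
      · refine pm_mono hp0 hp1 _ ?_
        rw [hA₀def]
        exact Finset.image_subset_image (Finset.filter_subset _ _)
      · refine pm_mono hp0 hp1 _ ?_
        intro G hG
        rw [Finset.mem_image] at hG
        obtain ⟨G', hG', rfl⟩ := hG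
        rw [hA₁def, Finset.mem_image] at hG'
        obtain ⟨F, hF, rfl⟩ := hG'
        rw [Finset.mem_filter] at hF
        refine Finset.mem_image.mpr ⟨F, hF.1, ?_⟩
        rw [Finset.inter_comm (F.erase e) (S v), hinter (S v) F hev, Finset.inter_comm F (S v)]
    -- assemble
    rw [pm_split e E' he A hA]
    have hQ : (0:ℝ) ≤ ∏ v ∈ V.filter (fun v => ¬ e ∈ S v),
        pm p (S v) (A.image (fun F => F ∩ S v)) :=
      Finset.prod_nonneg fun v _ => pm_nonneg hp0 hp1 _ _
    have hbound : ∀ (X : Finset (Finset ι)),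
        (∏ v ∈ V.filter (fun v => ¬ e ∈ S v), pm p (S' v) (X.image (fun F => F ∩ S' v)))
        ≤ ∏ v ∈ V.filter (fun v => ¬ e ∈ S v), pm p (S v) (A.image (fun F => F ∩ S v)) → True :=
      fun _ _ => trivial
    have hb0 : pm p E' A₀ ^ t ≤ (∏ v ∈ T, pm p (S' v) (A₀.image (fun F => F ∩ S' v))) *
        ∏ v ∈ V.filter (fun v => ¬ e ∈ S v), pm p (S v) (A.image (fun F => F ∩ S v)) := by
      refine le_trans IH0 ?_
      rw [← Finset.prod_filter_mul_prod_filter_not V (fun v => e ∈ S v)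
        (fun v => pm p (S' v) (A₀.image (fun F => F ∩ S' v)))]
      refine mul_le_mul_of_nonneg_left ?_
        (Finset.prod_nonneg fun v _ => pm_nonneg hp0 hp1 _ _)
      refine Finset.prod_le_prod (fun v _ => pm_nonneg hp0 hp1 _ _) ?_
      intro v hv
      rw [Finset.mem_filter] at hv
      exact (hmono v hv.1 hv.2).1
    have hb1 : pm p E' A₁ ^ t ≤ (∏ v ∈ T, pm p (S' v) (A₁.image (fun F => F ∩ S' v))) *
        ∏ v ∈ V.filter (fun v => ¬ e ∈ S v), pm p (S v) (A.image (fun F => F ∩ S v)) := by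
      refine le_trans IH1 ?_
      rw [← Finset.prod_filter_mul_prod_filter_not V (fun v => e ∈ S v)
        (fun v => pm p (S' v) (A₁.image (fun F => F ∩ S' v)))]
      refine mul_le_mul_of_nonneg_left ?_
        (Finset.prod_nonneg fun v _ => pm_nonneg hp0 hp1 _ _)
      refine Finset.prod_le_prod (fun v _ => pm_nonneg hp0 hp1 _ _) ?_
      intro v hv
      rw [Finset.mem_filter] at hv
      exact (hmono v hv.1 hv.2).2
    have hcomb := comb hp0 hp1 T hTne
      (fun v => pm p (S' v) (A₀.image (fun F => F ∩ S' v)))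
      (fun v => pm p (S' v) (A₁.image (fun F => F ∩ S' v)))
      (fun v _ => pm_nonneg hp0 hp1 _ _) (fun v _ => pm_nonneg hp0 hp1 _ _)
      _ hQ _ _ (pm_nonneg hp0 hp1 _ _) (pm_nonneg hp0 hp1 _ _)
      (hTcard ▸ hb0) (hTcard ▸ hb1)
    rw [hTcard] at hcomb
    refine le_trans hcomb ?_
    rw [← Finset.prod_filter_mul_prod_filter_not V (fun v => e ∈ S v)
      (fun v => pm p (S v) (A.image (fun F => F ∩ S v)))]
    refine mul_le_mul_of_nonneg_right ?_ hQ
    refine le_of_eq (Finset.prod_congr rfl ?_)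
    intro v hv
    exact ((hid v hv).symm)


end BT2

noncomputable def famN (r : ℕ) (P : ∀ n, Set (Finset (Finset (Fin n)))) (n : ℕ) :
    Finset (Finset (Finset (Fin n))) :=
  @Finset.filter _ (fun E => E ∈ P n) (Classical.decPred _) (edgeUniv r n).powerset

lemma prG_eq (r n : ℕ) (p : ℝ) (P : ∀ n, Set (Finset (Finset (Fin n)))) :
    prG r n p (P n) = BT2.pm p (edgeUniv r n) (famN r P n) := by
  classical
  rw [prG, BT2.pm, famN, Finset.sum_filter]
  refine Finset.sum_congr rfl fun E _ => ?_
  rw [Set.indicator_apply]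

lemma edgeUniv_card (r n : ℕ) : (edgeUniv r n).card = n.choose r := by
  rw [edgeUniv, Finset.card_powersetCard, Finset.card_univ, Fintype.card_fin]

lemma vertex_bound (r n : ℕ) (p : ℝ) (hp0 : 0 ≤ p) (hp1 : p ≤ 1)
    (P : ∀ n, Set (Finset (Finset (Fin n))))
    (hPhered : ∀ n, ∀ G ∈ P n, ∀ (k : ℕ) (H : Finset (Finset (Fin k))) (U : Finset (Fin n)),
      IsRGraph r k H → IsInducedCopyAt r k n H G U → H ∈ P k)
    (v : Fin (n+1)) :
    BT2.pm p (Finset.powersetCard r ({v}ᶜ))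
        ((famN r P (n+1)).image (fun F => F ∩ Finset.powersetCard r ({v}ᶜ)))
      ≤ BT2.pm p (edgeUniv r n) (famN r P n) := by
  classical
  set Sv := Finset.powersetCard r ({v}ᶜ : Finset (Fin (n+1))) with hSvdef
  set f := (Fin.succAboveOrderEmb v).toEmbedding with hfdef
  have hfv : ∀ x : Fin n, f x ≠ v := fun x => Fin.succAbove_ne v x
  have hU : (Finset.univ : Finset (Fin n)).map f = ({v}ᶜ : Finset (Fin (n+1))) := by
    apply Finset.eq_of_subset_of_card_le
    · intro x hx
      obtain ⟨y, _, rfl⟩ := Finset.mem_map.mp hx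
      rw [Finset.mem_compl, Finset.mem_singleton]
      exact hfv y
    · rw [Finset.card_compl, Finset.card_singleton, Fintype.card_fin,
        Finset.card_map, Finset.card_univ, Fintype.card_fin]
      omega
  have hSvcard : Sv.card = n.choose r := by
    rw [hSvdef, Finset.card_powersetCard, Finset.card_compl, Finset.card_singleton,
      Fintype.card_fin, Nat.add_sub_cancel]
  set Φ : Finset (Finset (Fin (n+1))) → Finset (Finset (Fin n)) :=
    fun G' => (edgeUniv r n).filter (fun a => a.map f ∈ G') with hΦdef
  have himg : ∀ G', G' ⊆ Sv → (Φ G').image (fun a => a.map f) = G' := by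
    intro G' hsub
    apply subset_antisymm
    · intro x hx
      obtain ⟨a, ha, rfl⟩ := Finset.mem_image.mp hx
      exact (Finset.mem_filter.mp ha).2
    · intro x hxG
      have hxS := hsub hxG
      rw [hSvdef, Finset.mem_powersetCard] at hxS
      have hxsub : x ⊆ Finset.univ.map f := by rw [hU]; exact hxS.1
      obtain ⟨u, _, rfl⟩ := Finset.subset_map_iff.mp hxsub
      refine Finset.mem_image.mpr ⟨u, ?_, rfl⟩
      refine Finset.mem_filter.mpr ⟨?_, hxG⟩
      rw [edgeUniv, Finset.mem_powersetCard]
      exact ⟨Finset.subset_univ u, by simpa using hxS.2⟩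
  have hcardΦ : ∀ G', G' ⊆ Sv → (Φ G').card = G'.card := by
    intro G' hsub
    conv_rhs => rw [← himg G' hsub]
    exact (Finset.card_image_of_injective _ (Finset.map_injective f)).symm
  set B := (famN r P (n+1)).image (fun F => F ∩ Sv) with hBdef
  have hBsub : ∀ G' ∈ B, G' ⊆ Sv := by
    intro G' hG'
    obtain ⟨F, _, rfl⟩ := Finset.mem_image.mp hG'
    exact Finset.inter_subset_right
  have hΦmem : ∀ G' ∈ B, Φ G' ∈ famN r P n := by
    intro G' hG'
    obtain ⟨G, hG, rfl⟩ := Finset.mem_image.mp hG'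
    rw [famN, Finset.mem_filter] at hG
    have hGP : G ∈ P (n+1) := hG.2
    have hΦsub : Φ (G ∩ Sv) ⊆ edgeUniv r n := Finset.filter_subset _ _
    rw [famN, Finset.mem_filter]
    refine ⟨Finset.mem_powerset.mpr hΦsub, ?_⟩
    refine hPhered (n+1) G hGP n (Φ (G ∩ Sv)) (Finset.univ.map f) hΦsub ?_
    refine ⟨f, rfl, fun a ha => ?_⟩
    have haE : a ∈ edgeUniv r n := by
      rw [edgeUniv, Finset.mem_powersetCard]; exact ⟨Finset.subset_univ a, ha⟩
    have hmapS : a.map f ∈ Sv := by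
      rw [hSvdef, Finset.mem_powersetCard]
      refine ⟨?_, by rw [Finset.card_map]; exact ha⟩
      rw [← hU]
      exact Finset.map_subset_map.mpr (Finset.subset_univ a)
    constructor
    · intro haΦ
      have := (Finset.mem_filter.mp haΦ).2
      exact (Finset.mem_inter.mp this).1
    · intro haG
      exact Finset.mem_filter.mpr ⟨haE, Finset.mem_inter.mpr ⟨haG, hmapS⟩⟩
  have hΦinj : ∀ G₁ ∈ B, ∀ G₂ ∈ B, Φ G₁ = Φ G₂ → G₁ = G₂ := by
    intro G₁ h₁ G₂ h₂ h
    rw [← himg G₁ (hBsub G₁ h₁), ← himg G₂ (hBsub G₂ h₂), h]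
  rw [BT2.pm, BT2.pm]
  have hsum : ∑ G' ∈ B, p ^ G'.card * (1 - p) ^ (Sv.card - G'.card)
      = ∑ H ∈ B.image Φ, p ^ H.card * (1 - p) ^ ((edgeUniv r n).card - H.card) := by
    rw [Finset.sum_image hΦinj]
    refine Finset.sum_congr rfl fun G' hG' => ?_
    rw [hcardΦ G' (hBsub G' hG'), hSvcard, edgeUniv_card]
  rw [hsum]
  refine Finset.sum_le_sum_of_subset_of_nonneg ?_ ?_
  · intro H hH
    obtain ⟨G', hG', rfl⟩ := Finset.mem_image.mp hH
    exact hΦmem G' hG'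
  · intro H _ _
    exact mul_nonneg (pow_nonneg hp0 _) (pow_nonneg (by linarith) _)

lemma key_step (r n : ℕ) (p : ℝ) (hp0 : 0 ≤ p) (hp1 : p ≤ 1)
    (P : ∀ n, Set (Finset (Finset (Fin n))))
    (hPhered : ∀ n, ∀ G ∈ P n, ∀ (k : ℕ) (H : Finset (Finset (Fin k))) (U : Finset (Fin n)),
      IsRGraph r k H → IsInducedCopyAt r k n H G U → H ∈ P k)
    (hrn : r ≤ n) :
    BT2.pm p (edgeUniv r (n+1)) (famN r P (n+1)) ^ (n+1-r)
      ≤ BT2.pm p (edgeUniv r n) (famN r P n) ^ (n+1) := by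
  classical
  have hcov : ∀ e ∈ edgeUniv r (n+1),
      ((Finset.univ : Finset (Fin (n+1))).filter
        (fun v => e ∈ Finset.powersetCard r ({v}ᶜ))).card = n+1-r := by
    intro e he
    rw [edgeUniv, Finset.mem_powersetCard] at he
    have hiff : ∀ v : Fin (n+1), e ∈ Finset.powersetCard r ({v}ᶜ) ↔ v ∉ e := by
      intro v
      rw [Finset.mem_powersetCard]
      constructor
      · rintro ⟨hsub, -⟩ hv
        exact (Finset.mem_compl.mp (hsub hv)) (Finset.mem_singleton_self v)
      · intro hv
        refine ⟨fun x hx => Finset.mem_compl.mpr ?_, he.2⟩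
        rw [Finset.mem_singleton]
        rintro rfl
        exact hv hx
    have : (Finset.univ : Finset (Fin (n+1))).filter
        (fun v => e ∈ Finset.powersetCard r ({v}ᶜ)) = eᶜ := by
      ext v
      simp only [Finset.mem_filter, Finset.mem_univ, true_and, Finset.mem_compl, hiff]
    rw [this, Finset.card_compl, Fintype.card_fin, he.2]
  have hsh := BT2.shearer hp0 hp1 (n+1-r) (by omega) (Finset.univ : Finset (Fin (n+1)))
    (edgeUniv r (n+1)) (fun v => Finset.powersetCard r ({v}ᶜ))
    (fun v _ => Finset.powersetCard_mono (Finset.subset_univ _) )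
    hcov (famN r P (n+1)) (Finset.filter_subset _ _)
  refine le_trans hsh ?_
  calc ∏ v : Fin (n+1), BT2.pm p (Finset.powersetCard r ({v}ᶜ))
        ((famN r P (n+1)).image (fun F => F ∩ Finset.powersetCard r ({v}ᶜ)))
      ≤ ∏ _v : Fin (n+1), BT2.pm p (edgeUniv r n) (famN r P n) := by
        refine Finset.prod_le_prod (fun v _ => BT2.pm_nonneg hp0 hp1 _ _) ?_
        intro v _
        exact vertex_bound r n p hp0 hp1 P hPhered v
    _ = BT2.pm p (edgeUniv r n) (famN r P n) ^ (n+1) := by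
        rw [Finset.prod_const, Finset.card_univ, Fintype.card_fin]



/-- **Alekseev; Bollobás–Thomason.** For a hereditary property `P` of `r`-graphs with
`Pⁿ` nonempty for every `n`, defining `c_n` by `Pr[G(n,p) ∈ Pⁿ] = 2 ^ (-c_n * C(n,r))`,
the limit of `c_n` exists. -/
theorem stmt_0 (r : ℕ) (hr : 1 ≤ r) (p : ℝ) (hp0 : 0 < p) (hp1 : p < 1)
    (P : ∀ n, Set (Finset (Finset (Fin n))))
    (hPgraph : ∀ n, ∀ G ∈ P n, IsRGraph r n G)
    (hPhered : ∀ n, ∀ G ∈ P n, ∀ (k : ℕ) (H : Finset (Finset (Fin k))) (U : Finset (Fin n)),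
      IsRGraph r k H → IsInducedCopyAt r k n H G U → H ∈ P k)
    (hPne : ∀ n, (P n).Nonempty)
    (c : ℕ → ℝ)
    (hc : ∀ n, prG r n p (P n) = 2 ^ (-(c n) * (n.choose r : ℝ))) :
    ∃ L : ℝ, Filter.Tendsto c Filter.atTop (nhds L) := by
  classical
  have hq : ∀ n, BT2.pm p (edgeUniv r n) (famN r P n)
      = (2:ℝ) ^ (-(c n) * (n.choose r : ℝ)) :=
    fun n => (prG_eq r n p P).symm.trans (hc n)
  -- monotonicity of c on [r, ∞)
  have hmono : ∀ n, r ≤ n → c n ≤ c (n+1) := by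
    intro n hrn
    have hkey := key_step r n p hp0.le hp1.le P hPhered hrn
    rw [hq n, hq (n+1)] at hkey
    have e1 : ((2:ℝ) ^ (-(c (n+1)) * (((n+1).choose r : ℕ) : ℝ))) ^ (n+1-r)
        = (2:ℝ) ^ ((-(c (n+1)) * (((n+1).choose r : ℕ) : ℝ)) * ((n+1-r : ℕ) : ℝ)) := by
      rw [← Real.rpow_natCast ((2:ℝ) ^ (-(c (n+1)) * (((n+1).choose r : ℕ) : ℝ))) (n+1-r),
        ← Real.rpow_mul (by norm_num : (0:ℝ) ≤ 2)]
    have e2 : ((2:ℝ) ^ (-(c n) * ((n.choose r : ℕ) : ℝ))) ^ (n+1)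
        = (2:ℝ) ^ ((-(c n) * ((n.choose r : ℕ) : ℝ)) * ((n+1 : ℕ) : ℝ)) := by
      rw [← Real.rpow_natCast ((2:ℝ) ^ (-(c n) * ((n.choose r : ℕ) : ℝ))) (n+1),
        ← Real.rpow_mul (by norm_num : (0:ℝ) ≤ 2)]
    rw [e1, e2, Real.rpow_le_rpow_left_iff (by norm_num : (1:ℝ) < 2)] at hkey
    have hidN : (n+1).choose r * (n+1-r) = n.choose r * (n+1) :=
      (Nat.choose_mul_succ_eq n r).symm
    have hid : (((n+1).choose r : ℕ) : ℝ) * ((n+1-r : ℕ) : ℝ)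
        = ((n.choose r : ℕ) : ℝ) * ((n+1 : ℕ) : ℝ) := by
      exact_mod_cast congrArg (Nat.cast (R := ℝ)) hidN
    have hK : (0:ℝ) < ((n.choose r : ℕ) : ℝ) * ((n+1 : ℕ) : ℝ) := by
      have h1 : 0 < n.choose r := Nat.choose_pos hrn
      have h2 : 0 < n + 1 := Nat.succ_pos n
      exact_mod_cast Nat.mul_pos h1 h2
    have hle : -(c (n+1)) * (((n.choose r : ℕ) : ℝ) * ((n+1:ℕ):ℝ))
        ≤ -(c n) * (((n.choose r : ℕ) : ℝ) * ((n+1:ℕ):ℝ)) := by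
      calc -(c (n+1)) * (((n.choose r : ℕ) : ℝ) * ((n+1:ℕ):ℝ))
          = (-(c (n+1)) * (((n+1).choose r : ℕ) : ℝ)) * ((n+1-r : ℕ):ℝ) := by
            rw [← hid]; ring
        _ ≤ (-(c n) * ((n.choose r : ℕ) : ℝ)) * ((n+1:ℕ):ℝ) := hkey
        _ = -(c n) * (((n.choose r : ℕ) : ℝ) * ((n+1:ℕ):ℝ)) := by ring
    have := (mul_le_mul_iff_of_pos_right hK).mp hle
    linarith
  -- uniform upper bound on c for n ≥ r
  have hbound : ∀ n, r ≤ n → c n ≤ - Real.logb 2 (min p (1-p)) := by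
    intro n hrn
    have hm₀pos : 0 < min p (1-p) := lt_min hp0 (by linarith)
    obtain ⟨G₀, hG₀⟩ := hPne n
    have hG₀sub : G₀ ⊆ edgeUniv r n := hPgraph n G₀ hG₀
    have hG₀mem : G₀ ∈ famN r P n := by
      rw [famN, Finset.mem_filter]
      exact ⟨Finset.mem_powerset.mpr hG₀sub, hG₀⟩
    have hlow : (min p (1-p)) ^ (n.choose r) ≤ BT2.pm p (edgeUniv r n) (famN r P n) := by
      have hterm : (min p (1-p)) ^ (n.choose r)
          ≤ p ^ G₀.card * (1-p) ^ ((edgeUniv r n).card - G₀.card) := by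
        have h1 : (min p (1-p)) ^ G₀.card ≤ p ^ G₀.card :=
          pow_le_pow_left₀ hm₀pos.le (min_le_left _ _) _
        have h2 : (min p (1-p)) ^ ((edgeUniv r n).card - G₀.card)
            ≤ (1-p) ^ ((edgeUniv r n).card - G₀.card) :=
          pow_le_pow_left₀ hm₀pos.le (min_le_right _ _) _
        have h3 : G₀.card + ((edgeUniv r n).card - G₀.card) = n.choose r := by
          have h4 := Finset.card_le_card hG₀sub
          have h5 := edgeUniv_card r n
          omega
        calc (min p (1-p)) ^ (n.choose r)
            = (min p (1-p)) ^ G₀.card * (min p (1-p)) ^ ((edgeUniv r n).card - G₀.card) := by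
              rw [← pow_add, h3]
          _ ≤ _ := mul_le_mul h1 h2 (pow_nonneg hm₀pos.le _) (pow_nonneg hp0.le _)
      refine le_trans hterm ?_
      exact Finset.single_le_sum (f := fun F : Finset (Finset (Fin n)) =>
          p ^ F.card * (1-p) ^ ((edgeUniv r n).card - F.card))
        (fun F _ => mul_nonneg (pow_nonneg hp0.le _) (pow_nonneg (by linarith) _)) hG₀mem
    have e3 : (min p (1-p)) ^ (n.choose r)
        = (2:ℝ) ^ (Real.logb 2 (min p (1-p)) * ((n.choose r : ℕ) : ℝ)) := by
      rw [Real.rpow_mul (by norm_num : (0:ℝ) ≤ 2), Real.rpow_logb (by norm_num) (by norm_num)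
        hm₀pos, Real.rpow_natCast]
    rw [hq n, e3] at hlow
    rw [Real.rpow_le_rpow_left_iff (by norm_num : (1:ℝ) < 2)] at hlow
    have hCpos : (0:ℝ) < ((n.choose r : ℕ) : ℝ) := by
      exact_mod_cast Nat.choose_pos hrn
    have := (mul_le_mul_iff_of_pos_right hCpos).mp hlow
    linarith
  -- conclude
  have hmono' : Monotone (fun j => c (j + r)) := by
    apply monotone_nat_of_le_succ
    intro j
    have h := hmono (j + r) (by omega)
    have e : j + 1 + r = j + r + 1 := by omega
    rw [e]
    exact h
  have hbdd : BddAbove (Set.range fun j => c (j + r)) := by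
    refine ⟨- Real.logb 2 (min p (1-p)), ?_⟩
    rintro x ⟨j, rfl⟩
    exact hbound (j + r) (by omega)
  have htend := tendsto_atTop_ciSup hmono' hbdd
  exact ⟨_, (Filter.tendsto_add_atTop_iff_nat r).mp htend⟩
end

section
/- Let ℱ be a collection of r-graphs each with at least t vertices, let 0 < p < 1, and let c = c(p,ℱ). Then for every ε > 0 there exist n₀ and δ > 0 (depending only on ε, p, ℱ) such that for every n > n₀, the probability that G(n,p) contains fewer than δ·n^t induced subgraphs lying in ℱ (i.e., fewer than δ·n^t vertex subsets U with G[U] isomorphic to a member of ℱ) is at most 2^{(-c+ε)·C(n,r)}. -/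
open Finset

namespace SuperAux

set_option linter.unusedSectionVars false

attribute [local instance] Classical.propDecidable

variable {α : Type*} [DecidableEq α]

/-- Bernoulli weight of configuration `A` within coordinate set `I`. -/
noncomputable def wt (p : ℝ) (I A : Finset α) : ℝ := p ^ A.card * (1 - p) ^ (I.card - A.card)

lemma wt_nonneg {p : ℝ} (hp0 : 0 ≤ p) (hp1 : p ≤ 1) (I A : Finset α) : 0 ≤ wt p I A := by
  have : (0:ℝ) ≤ 1 - p := by linarith
  exact mul_nonneg (pow_nonneg hp0 _) (pow_nonneg this _)

lemma sum_wt (p : ℝ) (I : Finset α) : ∑ A ∈ I.powerset, wt p I A = 1 := by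
  have := Finset.sum_pow_mul_eq_add_pow p (1 - p) I
  simp only [add_sub_cancel, one_pow] at this
  simpa [wt] using this

lemma wt_insert_not_mem {p : ℝ} {a : α} {I A : Finset α} (haI : a ∉ I) (hA : A ⊆ I) :
    wt p (insert a I) A = (1 - p) * wt p I A := by
  have haA : a ∉ A := fun h => haI (hA h)
  have hcard : (insert a I).card = I.card + 1 := Finset.card_insert_of_notMem haI
  have hle : A.card ≤ I.card := Finset.card_le_card hA
  unfold wt
  rw [hcard]
  have : I.card + 1 - A.card = (I.card - A.card) + 1 := by omega
  rw [this, pow_succ]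
  ring

lemma wt_insert_mem {p : ℝ} {a : α} {I A : Finset α} (haI : a ∉ I) (hA : A ⊆ I) :
    wt p (insert a I) (insert a A) = p * wt p I A := by
  have haA : a ∉ A := fun h => haI (hA h)
  have hcard : (insert a I).card = I.card + 1 := Finset.card_insert_of_notMem haI
  have hcard' : (insert a A).card = A.card + 1 := Finset.card_insert_of_notMem haA
  have hle : A.card ≤ I.card := Finset.card_le_card hA
  unfold wt
  rw [hcard, hcard']
  have : I.card + 1 - (A.card + 1) = I.card - A.card := by omega
  rw [this, pow_succ]
  ring

/-- Splitting a sum over the powerset of a disjoint union. -/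
lemma sum_powerset_union {S T : Finset α} (hST : Disjoint S T) (F : Finset α → ℝ) :
    ∑ A ∈ (S ∪ T).powerset, F A = ∑ B ∈ S.powerset, ∑ C ∈ T.powerset, F (B ∪ C) := by
  rw [Finset.sum_sigma']
  refine Finset.sum_nbij' (fun A => ⟨A ∩ S, A ∩ T⟩) (fun P => P.1 ∪ P.2) ?_ ?_ ?_ ?_ ?_
  · intro A hA
    simp only [Finset.mem_sigma, Finset.mem_powerset] at *
    exact ⟨Finset.inter_subset_right, Finset.inter_subset_right⟩
  · intro P hP
    simp only [Finset.mem_sigma, Finset.mem_powerset] at *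
    exact Finset.union_subset_union hP.1 hP.2
  · intro A hA
    simp only [Finset.mem_powerset] at hA
    show (A ∩ S) ∪ (A ∩ T) = A
    rw [← Finset.inter_union_distrib_left]
    exact Finset.inter_eq_left.mpr hA
  · intro P hP
    simp only [Finset.mem_sigma, Finset.mem_powerset] at hP
    have h1 : (P.1 ∪ P.2) ∩ S = P.1 := by
      rw [Finset.union_inter_distrib_right]
      rw [Finset.inter_eq_left.mpr hP.1]
      have : P.2 ∩ S = ∅ := by
        apply Finset.eq_empty_of_forall_notMem
        intro x hx
        simp only [Finset.mem_inter] at hx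
        exact (Finset.disjoint_right.mp hST) (hP.2 hx.1) hx.2
      rw [this, Finset.union_empty]
    have h2 : (P.1 ∪ P.2) ∩ T = P.2 := by
      rw [Finset.union_inter_distrib_right]
      rw [Finset.inter_eq_left.mpr hP.2]
      have : P.1 ∩ T = ∅ := by
        apply Finset.eq_empty_of_forall_notMem
        intro x hx
        simp only [Finset.mem_inter] at hx
        exact (Finset.disjoint_left.mp hST) (hP.1 hx.1) hx.2
      rw [this, Finset.empty_union]
    exact Sigma.ext h1 (by simpa using h2)
  · intro A hA
    simp only [Finset.mem_powerset] at hA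
    show F A = F ((A ∩ S) ∪ (A ∩ T))
    rw [← Finset.inter_union_distrib_left, Finset.inter_eq_left.mpr hA]

lemma wt_union {p : ℝ} {S T B C : Finset α} (hST : Disjoint S T) (hB : B ⊆ S) (hC : C ⊆ T) :
    wt p (S ∪ T) (B ∪ C) = wt p S B * wt p T C := by
  have hBC : Disjoint B C := hST.mono hB hC
  have h1 : (S ∪ T).card = S.card + T.card := Finset.card_union_of_disjoint hST
  have h2 : (B ∪ C).card = B.card + C.card := Finset.card_union_of_disjoint hBC
  have hB' : B.card ≤ S.card := Finset.card_le_card hB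
  have hC' : C.card ≤ T.card := Finset.card_le_card hC
  unfold wt
  rw [h1, h2]
  have : S.card + T.card - (B.card + C.card) = (S.card - B.card) + (T.card - C.card) := by omega
  rw [this, pow_add, pow_add]
  ring

/-- A function depending only on coordinates in `S ⊆ I` can be integrated over `S` alone. -/
lemma sum_wt_restrict_aux {p : ℝ} {S T : Finset α} (hd : Disjoint S T) (g : Finset α → ℝ) :
    ∑ A ∈ (S ∪ T).powerset, wt p (S ∪ T) A * g (A ∩ S) = ∑ B ∈ S.powerset, wt p S B * g B := by
  calc ∑ A ∈ (S ∪ T).powerset, wt p (S ∪ T) A * g (A ∩ S)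
      = ∑ B ∈ S.powerset, ∑ C ∈ T.powerset, wt p (S ∪ T) (B ∪ C) * g ((B ∪ C) ∩ S) :=
        sum_powerset_union hd _
    _ = ∑ B ∈ S.powerset, ∑ C ∈ T.powerset, (wt p S B * g B) * wt p T C := by
        refine Finset.sum_congr rfl fun B hB => Finset.sum_congr rfl fun C hC => ?_
        simp only [Finset.mem_powerset] at hB hC
        rw [wt_union hd hB hC]
        have : (B ∪ C) ∩ S = B := by
          rw [Finset.union_inter_distrib_right, Finset.inter_eq_left.mpr hB]
          have : C ∩ S = ∅ := by
            apply Finset.eq_empty_of_forall_notMem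
            intro x hx
            simp only [Finset.mem_inter] at hx
            exact (Finset.disjoint_right.mp hd) (hC hx.1) hx.2
          rw [this, Finset.union_empty]
        rw [this]; ring
    _ = ∑ B ∈ S.powerset, wt p S B * g B := by
        refine Finset.sum_congr rfl fun B hB => ?_
        rw [← Finset.mul_sum, sum_wt, mul_one]

/-- A function depending only on coordinates in `S ⊆ I` can be integrated over `S` alone. -/
lemma sum_wt_restrict {p : ℝ} {I S : Finset α} (hS : S ⊆ I) (g : Finset α → ℝ) :
    ∑ A ∈ I.powerset, wt p I A * g (A ∩ S) = ∑ B ∈ S.powerset, wt p S B * g B := by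
  have hI : S ∪ (I \ S) = I := Finset.union_sdiff_of_subset hS
  have key := sum_wt_restrict_aux (Finset.disjoint_sdiff) g (p := p) (S := S) (T := I \ S)
  rwa [hI] at key


/-- Weighted AM-GM with total weight at most one (deficit padded by `1`). -/
lemma geom_mean_le_arith_mean_weighted_le_one {κ : Type*} (J : Finset κ) (w z : κ → ℝ)
    (hw : ∀ k ∈ J, 0 ≤ w k) (hw' : ∑ k ∈ J, w k ≤ 1) (hz : ∀ k ∈ J, 0 ≤ z k) :
    ∏ k ∈ J, z k ^ (w k) ≤ (1 - ∑ k ∈ J, w k) + ∑ k ∈ J, w k * z k := by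
  classical
  set s : Finset (Option κ) := Finset.cons none (J.map Function.Embedding.some) (by simp) with hs
  have key := Real.geom_mean_le_arith_mean_weighted s
      (fun o => o.elim (1 - ∑ k ∈ J, w k) w) (fun o => o.elim 1 z) ?_ ?_ ?_
  · rw [hs, Finset.prod_cons, Finset.sum_cons, Finset.prod_map, Finset.sum_map] at key
    simp only [Option.elim, Function.Embedding.some_apply] at key
    rw [Real.one_rpow] at key
    simpa using key
  · intro o ho
    rw [hs, Finset.mem_cons] at ho
    rcases ho with h | h
    · subst h; simp only [Option.elim]; linarith
    · simp only [Finset.mem_map, Function.Embedding.some_apply] at h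
      obtain ⟨k, hk, rfl⟩ := h
      exact hw k hk
  · rw [hs, Finset.sum_cons, Finset.sum_map]
    simp only [Option.elim, Function.Embedding.some_apply]
    ring
  · intro o ho
    rw [hs, Finset.mem_cons] at ho
    rcases ho with h | h
    · subst h; simp only [Option.elim]; norm_num
    · simp only [Finset.mem_map, Function.Embedding.some_apply] at h
      obtain ⟨k, hk, rfl⟩ := h
      exact hz k hk

/-- Equal-exponent finite weighted Hölder inequality: if `#J ≤ q` then
`∑ μ b ∏_{k∈J} h k b ≤ ∏_{k∈J} (∑ μ b (h k b)^q)^(1/q)` for a probability weighting `μ`. -/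
lemma weighted_holder {β κ : Type*} (s : Finset β) (μ : β → ℝ) (hμ0 : ∀ b ∈ s, 0 ≤ μ b)
    (hμ1 : ∑ b ∈ s, μ b = 1) (q : ℕ) (hq : 0 < q) (J : Finset κ) (hJ : J.card ≤ q)
    (h : κ → β → ℝ) (hh : ∀ k ∈ J, ∀ b ∈ s, 0 ≤ h k b) :
    ∑ b ∈ s, μ b * ∏ k ∈ J, h k b ≤ ∏ k ∈ J, (∑ b ∈ s, μ b * (h k b) ^ q) ^ ((q : ℝ)⁻¹) := by
  classical
  set T : κ → ℝ := fun k => ∑ b ∈ s, μ b * (h k b) ^ q with hT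
  have hT0 : ∀ k ∈ J, 0 ≤ T k := fun k hk =>
    Finset.sum_nonneg fun b hb => mul_nonneg (hμ0 b hb) (pow_nonneg (hh k hk b hb) _)
  by_cases hzero : ∃ k ∈ J, T k = 0
  · obtain ⟨k₀, hk₀, hTk₀⟩ := hzero
    have hterm : ∀ b ∈ s, μ b * (h k₀ b) ^ q = 0 := by
      intro b hb
      have := (Finset.sum_eq_zero_iff_of_nonneg (fun b hb =>
        mul_nonneg (hμ0 b hb) (pow_nonneg (hh k₀ hk₀ b hb) _))).mp hTk₀
      exact this b hb
    have hLHS : ∑ b ∈ s, μ b * ∏ k ∈ J, h k b = 0 := by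
      apply Finset.sum_eq_zero
      intro b hb
      rcases mul_eq_zero.mp (hterm b hb) with h1 | h1
      · rw [h1, zero_mul]
      · have : h k₀ b = 0 := pow_eq_zero_iff hq.ne'|>.mp h1
        rw [Finset.prod_eq_zero hk₀ this, mul_zero]
    rw [hLHS]
    apply Finset.prod_nonneg
    intro k hk
    exact Real.rpow_nonneg (hT0 k hk) _
  · push_neg at hzero
    have hTpos : ∀ k ∈ J, 0 < T k := fun k hk => lt_of_le_of_ne (hT0 k hk) (Ne.symm (hzero k hk))
    -- pointwise bound
    set P : ℝ := ∏ k ∈ J, (T k) ^ ((q:ℝ)⁻¹) with hP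
    have hPpos : 0 < P := Finset.prod_pos fun k hk => Real.rpow_pos_of_pos (hTpos k hk) _
    have hsumw : ∑ _k ∈ J, (q:ℝ)⁻¹ = (J.card : ℝ) * (q:ℝ)⁻¹ := by
      rw [Finset.sum_const, nsmul_eq_mul]
    have hwle : (J.card : ℝ) * (q:ℝ)⁻¹ ≤ 1 := by
      rw [← div_eq_mul_inv, div_le_one (by exact_mod_cast hq)]
      exact_mod_cast hJ
    have hpt : ∀ b ∈ s, ∏ k ∈ J, h k b ≤
        P * ((1 - (J.card : ℝ) * (q:ℝ)⁻¹) + ∑ k ∈ J, (q:ℝ)⁻¹ * ((h k b) ^ q / T k)) := by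
      intro b hb
      have hgm := geom_mean_le_arith_mean_weighted_le_one J (fun _ => (q:ℝ)⁻¹)
          (fun k => (h k b) ^ q / T k) (fun k hk => by positivity)
          (by rw [hsumw]; exact hwle)
          (fun k hk => div_nonneg (pow_nonneg (hh k hk b hb) _) (hT0 k hk))
      rw [hsumw] at hgm
      have hfac : ∀ k ∈ J, ((h k b) ^ q / T k) ^ ((q:ℝ)⁻¹)
          = h k b / (T k) ^ ((q:ℝ)⁻¹) := by
        intro k hk
        rw [Real.div_rpow (pow_nonneg (hh k hk b hb) _) (hT0 k hk),
          Real.pow_rpow_inv_natCast (hh k hk b hb) hq.ne']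
      rw [Finset.prod_congr rfl hfac, Finset.prod_div_distrib, ← hP,
        div_le_iff₀ hPpos] at hgm
      calc ∏ k ∈ J, h k b ≤ ((1 - (J.card:ℝ) * (q:ℝ)⁻¹) +
            ∑ k ∈ J, (q:ℝ)⁻¹ * ((h k b) ^ q / T k)) * P := hgm
        _ = P * ((1 - (J.card:ℝ) * (q:ℝ)⁻¹) + ∑ k ∈ J, (q:ℝ)⁻¹ * ((h k b) ^ q / T k)) := by ring
    have hswap : ∑ b ∈ s, μ b * ∑ k ∈ J, (q:ℝ)⁻¹ * ((h k b) ^ q / T k)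
        = (J.card : ℝ) * (q:ℝ)⁻¹ := by
      simp_rw [Finset.mul_sum]
      rw [Finset.sum_comm]
      rw [← hsumw]
      refine Finset.sum_congr rfl fun k hk => ?_
      have : ∀ b ∈ s, μ b * ((q:ℝ)⁻¹ * ((h k b) ^ q / T k))
          = (q:ℝ)⁻¹ / T k * (μ b * (h k b) ^ q) := fun b hb => by ring
      rw [Finset.sum_congr rfl this, ← Finset.mul_sum]
      have hTk : ∑ b ∈ s, μ b * h k b ^ q = T k := rfl
      rw [hTk, div_mul_eq_mul_div, mul_div_assoc, div_self (hzero k hk), mul_one]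
    calc ∑ b ∈ s, μ b * ∏ k ∈ J, h k b
        ≤ ∑ b ∈ s, μ b * (P * ((1 - (J.card:ℝ) * (q:ℝ)⁻¹)
            + ∑ k ∈ J, (q:ℝ)⁻¹ * ((h k b) ^ q / T k))) := by
          refine Finset.sum_le_sum fun b hb => ?_
          exact mul_le_mul_of_nonneg_left (hpt b hb) (hμ0 b hb)
      _ = P * ((1 - (J.card:ℝ) * (q:ℝ)⁻¹) * ∑ b ∈ s, μ b
            + ∑ b ∈ s, μ b * ∑ k ∈ J, (q:ℝ)⁻¹ * ((h k b) ^ q / T k)) := by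
          rw [Finset.mul_sum, ← Finset.sum_add_distrib]
          · rw [Finset.mul_sum]
            refine Finset.sum_congr rfl fun b hb => ?_
            ring
      _ = P := by rw [hμ1, hswap]; ring
      _ = ∏ k ∈ J, (∑ b ∈ s, μ b * (h k b) ^ q) ^ ((q:ℝ)⁻¹) := by rw [hP]


/-- Finner-type generalized Hölder inequality for Bernoulli product weights on a powerset. -/
lemma finner {κ : Type*} [DecidableEq κ] {p : ℝ} (hp0 : 0 ≤ p) (hp1 : p ≤ 1)
    (q : ℕ) (hq : 0 < q) (I : Finset α) :
    ∀ (𝔐 : Finset κ) (S : κ → Finset α) (f : κ → Finset α → ℝ),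
    (∀ k ∈ 𝔐, ∀ A ⊆ I, ∀ B ⊆ I, A ∩ S k = B ∩ S k → f k A = f k B) →
    (∀ k ∈ 𝔐, ∀ A, 0 ≤ f k A) →
    (∀ i, (𝔐.filter (fun k => i ∈ S k)).card ≤ q) →
    ∑ A ∈ I.powerset, wt p I A * ∏ k ∈ 𝔐, f k A
      ≤ ∏ k ∈ 𝔐, (∑ A ∈ I.powerset, wt p I A * (f k A) ^ q) ^ ((q : ℝ)⁻¹) := by
  induction I using Finset.induction_on with
  | empty =>
    intro 𝔐 S f hdep hf0 hdeg
    simp only [Finset.powerset_empty, Finset.sum_singleton]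
    have hwt : wt p (∅ : Finset α) ∅ = 1 := by simp [wt]
    simp only [hwt, one_mul]
    apply le_of_eq
    refine Finset.prod_congr rfl fun k hk => ?_
    rw [Real.pow_rpow_inv_natCast (hf0 k hk ∅) hq.ne']
  | @insert a I haI ih =>
    intro 𝔐 S f hdep hf0 hdeg
    -- split the sum over the powerset of `insert a I`
    rw [Finset.sum_powerset_insert haI]
    have hw0 : ∀ A ∈ I.powerset, wt p (insert a I) A * ∏ k ∈ 𝔐, f k A
        = (1 - p) * (wt p I A * ∏ k ∈ 𝔐, f k A) := by
      intro A hA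
      rw [wt_insert_not_mem haI (Finset.mem_powerset.mp hA)]; ring
    have hw1 : ∀ A ∈ I.powerset, wt p (insert a I) (insert a A) * ∏ k ∈ 𝔐, f k (insert a A)
        = p * (wt p I A * ∏ k ∈ 𝔐, f k (insert a A)) := by
      intro A hA
      rw [wt_insert_mem haI (Finset.mem_powerset.mp hA)]; ring
    rw [Finset.sum_congr rfl hw0, Finset.sum_congr rfl hw1, ← Finset.mul_sum, ← Finset.mul_sum]
    -- apply the induction hypothesis to the two slices
    set f0 : κ → Finset α → ℝ := fun k A => f k A with hf0def
    set f1 : κ → Finset α → ℝ := fun k A => f k (insert a A) with hf1def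
    have hsub : ∀ A : Finset α, A ⊆ I → A ⊆ insert a I :=
      fun A hA => hA.trans (Finset.subset_insert a I)
    have hmemins : ∀ A : Finset α, A ⊆ I → insert a A ⊆ insert a I :=
      fun A hA => Finset.insert_subset_insert a hA
    have hnotmem : ∀ A : Finset α, A ⊆ I → a ∉ A := fun A hA h => haI (hA h)
    have key0 : ∀ (k : κ), k ∈ 𝔐 → ∀ A ⊆ I, ∀ B ⊆ I,
        A ∩ (S k).erase a = B ∩ (S k).erase a → f0 k A = f0 k B := by
      intro k hk A hA B hB hAB
      apply hdep k hk A (hsub A hA) B (hsub B hB)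
      ext x
      by_cases hx : x = a
      · subst hx
        constructor
        · intro h; exact absurd (Finset.mem_inter.mp h).1 (hnotmem A hA)
        · intro h; exact absurd (Finset.mem_inter.mp h).1 (hnotmem B hB)
      · have : ∀ C : Finset α, x ∈ C ∩ (S k).erase a ↔ x ∈ C ∩ S k := by
          intro C
          simp only [Finset.mem_inter, Finset.mem_erase]
          tauto
        rw [← this A, ← this B, hAB]
    have key1 : ∀ (k : κ), k ∈ 𝔐 → ∀ A ⊆ I, ∀ B ⊆ I,
        A ∩ (S k).erase a = B ∩ (S k).erase a → f1 k A = f1 k B := by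
      intro k hk A hA B hB hAB
      apply hdep k hk _ (hmemins A hA) _ (hmemins B hB)
      ext x
      by_cases hx : x = a
      · subst hx
        simp only [Finset.mem_inter, Finset.mem_insert, true_or, true_and]
      · have : ∀ C : Finset α, C ⊆ I → (x ∈ insert a C ∩ S k ↔ x ∈ C ∩ (S k).erase a) := by
          intro C hC
          simp only [Finset.mem_inter, Finset.mem_insert, Finset.mem_erase]
          tauto
        rw [this A hA, this B hB, hAB]
    have hdeg' : ∀ i, (𝔐.filter (fun k => i ∈ (S k).erase a)).card ≤ q := by
      intro i
      refine le_trans (Finset.card_le_card ?_) (hdeg i)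
      intro k hk
      simp only [Finset.mem_filter, Finset.mem_erase] at *
      exact ⟨hk.1, hk.2.2⟩
    have ih0 := ih 𝔐 (fun k => (S k).erase a) f0 key0 (fun k hk A => hf0 k hk A) hdeg'
    have ih1 := ih 𝔐 (fun k => (S k).erase a) f1 key1 (fun k hk A => hf0 k hk _) hdeg'
    -- abbreviations for the two slice "norms"
    set T0 : κ → ℝ := fun k => ∑ A ∈ I.powerset, wt p I A * (f0 k A) ^ q with hT0def
    set T1 : κ → ℝ := fun k => ∑ A ∈ I.powerset, wt p I A * (f1 k A) ^ q with hT1def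
    have hp1' : (0:ℝ) ≤ 1 - p := by linarith
    have hT0nn : ∀ k ∈ 𝔐, 0 ≤ T0 k := fun k hk => Finset.sum_nonneg fun A hA =>
      mul_nonneg (wt_nonneg hp0 hp1 _ _) (pow_nonneg (hf0 k hk A) _)
    have hT1nn : ∀ k ∈ 𝔐, 0 ≤ T1 k := fun k hk => Finset.sum_nonneg fun A hA =>
      mul_nonneg (wt_nonneg hp0 hp1 _ _) (pow_nonneg (hf0 k hk _) _)
    -- the full norms
    have hT'eq : ∀ k ∈ 𝔐,
        ∑ A ∈ (insert a I).powerset, wt p (insert a I) A * (f k A) ^ q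
          = (1 - p) * T0 k + p * T1 k := by
      intro k hk
      rw [Finset.sum_powerset_insert haI]
      rw [hT0def, hT1def]
      simp only []
      rw [Finset.mul_sum, Finset.mul_sum]
      congr 1
      · refine Finset.sum_congr rfl fun A hA => ?_
        rw [wt_insert_not_mem haI (Finset.mem_powerset.mp hA)]
        simp only [hf0def]; ring
      · refine Finset.sum_congr rfl fun A hA => ?_
        rw [wt_insert_mem haI (Finset.mem_powerset.mp hA)]
        simp only [hf1def]; ring
    -- step 2
    have step2 : (1-p) * (∑ A ∈ I.powerset, wt p I A * ∏ k ∈ 𝔐, f k A)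
          + p * (∑ A ∈ I.powerset, wt p I A * ∏ k ∈ 𝔐, f k (insert a A))
        ≤ (1-p) * ∏ k ∈ 𝔐, (T0 k) ^ ((q:ℝ)⁻¹) + p * ∏ k ∈ 𝔐, (T1 k) ^ ((q:ℝ)⁻¹) :=
      add_le_add (mul_le_mul_of_nonneg_left ih0 hp1') (mul_le_mul_of_nonneg_left ih1 hp0)
    refine le_trans step2 ?_
    -- now the two-point Hölder step
    set Ja : Finset κ := 𝔐.filter (fun k => a ∈ S k) with hJa
    have hJaq : Ja.card ≤ q := hdeg a
    have hJasub : Ja ⊆ 𝔐 := Finset.filter_subset _ _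
    have heqc : ∀ k ∈ 𝔐, a ∉ S k → T0 k = T1 k := by
      intro k hk hkS
      refine Finset.sum_congr rfl fun A hA => ?_
      have hAI := Finset.mem_powerset.mp hA
      have : f k (insert a A) = f k A := by
        apply hdep k hk _ (hmemins A hAI) _ (hsub A hAI)
        ext x
        simp only [Finset.mem_inter, Finset.mem_insert]
        constructor
        · rintro ⟨h1 | h1, h2⟩
          · exact absurd (h1 ▸ h2) hkS
          · exact ⟨h1, h2⟩
        · rintro ⟨h1, h2⟩; exact ⟨Or.inr h1, h2⟩
      simp only [hf0def, hf1def, this]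
    -- Hölder over the two-point space
    have hmu1 : (1 - p) + p = 1 := by ring
    have hold := weighted_holder (Finset.univ : Finset Bool)
        (fun b => if b then p else 1 - p)
        (fun b _ => by by_cases hb : b <;> simp [hb, hp0, hp1'])
        (by simp [hmu1]) q hq Ja hJaq
        (fun k b => if b then (T1 k) ^ ((q:ℝ)⁻¹) else (T0 k) ^ ((q:ℝ)⁻¹))
        (fun k hk b _ => by
          by_cases hb : b <;> simp only [hb, if_true, if_false] <;>
            exact Real.rpow_nonneg (by first
              | exact hT1nn k (hJasub hk)
              | exact hT0nn k (hJasub hk)) _)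
    simp only [Fintype.sum_bool] at hold
    norm_num at hold
    have hold2 : p * ∏ k ∈ Ja, (T1 k) ^ ((q:ℝ)⁻¹) + (1-p) * ∏ k ∈ Ja, (T0 k) ^ ((q:ℝ)⁻¹)
        ≤ ∏ k ∈ Ja, ((1-p) * T0 k + p * T1 k) ^ ((q:ℝ)⁻¹) := by
      refine le_trans hold (le_of_eq (Finset.prod_congr rfl fun k hk => ?_))
      rw [Real.rpow_inv_natCast_pow (hT1nn k (hJasub hk)) hq.ne',
        Real.rpow_inv_natCast_pow (hT0nn k (hJasub hk)) hq.ne', add_comm]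
    have hsplit0 := Finset.prod_filter_mul_prod_filter_not 𝔐 (fun k => a ∈ S k)
        (fun k => (T0 k) ^ ((q:ℝ)⁻¹))
    have hsplit1 := Finset.prod_filter_mul_prod_filter_not 𝔐 (fun k => a ∈ S k)
        (fun k => (T1 k) ^ ((q:ℝ)⁻¹))
    set Jc : Finset κ := 𝔐.filter (fun k => ¬ a ∈ S k) with hJc
    have hJcmem : ∀ k ∈ Jc, k ∈ 𝔐 ∧ a ∉ S k := fun k hk => Finset.mem_filter.mp hk
    set Pc : ℝ := ∏ k ∈ Jc, (T0 k) ^ ((q:ℝ)⁻¹) with hPc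
    have hPcnn : 0 ≤ Pc := Finset.prod_nonneg fun k hk =>
      Real.rpow_nonneg (hT0nn k (hJcmem k hk).1) _
    have hJc1 : ∏ k ∈ Jc, (T1 k) ^ ((q:ℝ)⁻¹) = Pc := by
      refine Finset.prod_congr rfl fun k hk => ?_
      rw [← heqc k (hJcmem k hk).1 (hJcmem k hk).2]
    -- rewrite RHS
    have hRHS : ∏ k ∈ 𝔐, (∑ A ∈ (insert a I).powerset, wt p (insert a I) A * (f k A) ^ q)
          ^ ((q:ℝ)⁻¹)
        = (∏ k ∈ Ja, ((1-p) * T0 k + p * T1 k) ^ ((q:ℝ)⁻¹)) * Pc := by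
      rw [Finset.prod_congr rfl (fun k hk => by rw [hT'eq k hk]),
        ← Finset.prod_filter_mul_prod_filter_not 𝔐 (fun k => a ∈ S k)]
      congr 1
      refine Finset.prod_congr rfl fun k hk => ?_
      have hk' := Finset.mem_filter.mp hk
      rw [← heqc k hk'.1 hk'.2]
      have : (1-p) * T0 k + p * T0 k = T0 k := by ring
      rw [this]
    rw [hRHS, ← hsplit0, ← hsplit1, hJc1]
    calc (1-p) * ((∏ k ∈ Ja, (T0 k) ^ ((q:ℝ)⁻¹)) * Pc)
          + p * ((∏ k ∈ Ja, (T1 k) ^ ((q:ℝ)⁻¹)) * Pc)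
        = (p * ∏ k ∈ Ja, (T1 k) ^ ((q:ℝ)⁻¹) + (1-p) * ∏ k ∈ Ja, (T0 k) ^ ((q:ℝ)⁻¹)) * Pc := by
          ring
      _ ≤ (∏ k ∈ Ja, ((1-p) * T0 k + p * T1 k) ^ ((q:ℝ)⁻¹)) * Pc :=
          mul_le_mul_of_nonneg_right hold2 hPcnn


end SuperAux


namespace SuperMain
open SuperAux

set_option linter.unusedSectionVars false
set_option maxHeartbeats 1000000

attribute [local instance] Classical.propDecidable

lemma prG_eq (r n : ℕ) (p : ℝ) (A : Set (Finset (Finset (Fin n)))) :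
    prG r n p A = ∑ E ∈ (edgeUniv r n).powerset,
      (if E ∈ A then wt p (edgeUniv r n) E else 0) := by
  unfold prG
  refine Finset.sum_congr rfl fun E hE => ?_
  rw [Set.indicator_apply]
  simp [wt]

lemma prG_nonneg {r n : ℕ} {p : ℝ} (hp0 : 0 ≤ p) (hp1 : p ≤ 1)
    (A : Set (Finset (Finset (Fin n)))) : 0 ≤ prG r n p A := by
  rw [prG_eq]
  refine Finset.sum_nonneg fun E hE => ?_
  split
  · exact wt_nonneg hp0 hp1 _ _
  · exact le_refl 0

lemma prG_le_sum {r n : ℕ} {p : ℝ} (hp0 : 0 ≤ p) (hp1 : p ≤ 1)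
    (A : Set (Finset (Finset (Fin n)))) :
    prG r n p A ≤ 1 := by
  rw [prG_eq, ← sum_wt p (edgeUniv r n)]
  refine Finset.sum_le_sum fun E hE => ?_
  split
  · exact le_refl _
  · exact wt_nonneg hp0 hp1 _ _

lemma prG_mono_mem {r n : ℕ} {p : ℝ} (hp0 : 0 ≤ p) (hp1 : p ≤ 1)
    {A B : Set (Finset (Finset (Fin n)))}
    (h : ∀ E ∈ (edgeUniv r n).powerset, E ∈ A → E ∈ B) :
    prG r n p A ≤ prG r n p B := by
  rw [prG_eq, prG_eq]
  refine Finset.sum_le_sum fun E hE => ?_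
  by_cases hEA : E ∈ A
  · rw [if_pos hEA, if_pos (h E hE hEA)]
  · rw [if_neg hEA]
    split
    · exact wt_nonneg hp0 hp1 _ _
    · exact le_refl 0

lemma card_supersets {n m : ℕ} (U : Finset (Fin n)) (hUm : U.card ≤ m) :
    ((Finset.powersetCard m (Finset.univ : Finset (Fin n))).filter
      (fun M => U ⊆ M)).card = (n - U.card).choose (m - U.card) := by
  have hcard : ((Finset.univ : Finset (Fin n)) \ U).card = n - U.card := by
    rw [Finset.card_sdiff_of_subset (Finset.subset_univ U), Finset.card_univ, Fintype.card_fin]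
  rw [← hcard, ← Finset.card_powersetCard]
  apply Finset.card_nbij' (fun M => M \ U) (fun V => V ∪ U)
  · intro M hM
    simp only [Finset.mem_coe, Finset.mem_filter, Finset.mem_powersetCard] at hM
    obtain ⟨⟨hMu, hMc⟩, hUM⟩ := hM
    simp only [Finset.mem_coe, Finset.mem_powersetCard]
    constructor
    · intro x hx
      simp only [Finset.mem_sdiff] at *
      exact ⟨Finset.mem_univ x, hx.2⟩
    · rw [Finset.card_sdiff_of_subset hUM, hMc]
  · intro V hV
    simp only [Finset.mem_coe, Finset.mem_powersetCard] at hV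
    obtain ⟨hVu, hVc⟩ := hV
    have hdisj : Disjoint V U := by
      rw [Finset.disjoint_right]
      intro x hxU hxV
      have := hVu hxV
      simp only [Finset.mem_sdiff] at this
      exact this.2 hxU
    simp only [Finset.mem_coe, Finset.mem_filter, Finset.mem_powersetCard]
    refine ⟨⟨Finset.subset_univ _, ?_⟩, Finset.subset_union_right⟩
    rw [Finset.card_union_of_disjoint hdisj, hVc]
    omega
  · intro M hM
    simp only [Finset.mem_coe, Finset.mem_filter] at hM
    exact Finset.sdiff_union_of_subset hM.2
  · intro V hV
    simp only [Finset.mem_coe, Finset.mem_powersetCard] at hV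
    have hdisj : Disjoint V U := by
      rw [Finset.disjoint_right]
      intro x hxU hxV
      have := hV.1 hxV
      simp only [Finset.mem_sdiff] at this
      exact this.2 hxU
    show (V ∪ U) \ U = V
    rw [Finset.union_sdiff_right]
    exact Finset.sdiff_eq_self_of_disjoint hdisj

lemma choose_sub_le_choose_sub {t m n : ℕ} (hmn : m ≤ n) :
    ∀ k, t ≤ k → k ≤ m → (n - k).choose (m - k) ≤ (n - t).choose (m - t) := by
  intro k
  induction k with
  | zero =>
    intro h1 h2
    have : t = 0 := by omega
    subst this
    exact le_refl _
  | succ k ih =>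
    intro h1 h2
    rcases Nat.lt_or_ge t (k+1) with h | h
    · have ht : t ≤ k := by omega
      refine le_trans ?_ (ih ht (by omega))
      have e1 : n - k = (n - (k+1)) + 1 := by omega
      have e2 : m - k = (m - (k+1)) + 1 := by omega
      rw [e1, e2, Nat.choose_succ_succ]
      exact Nat.le_add_right _ _
    · have : t = k + 1 := by omega
      subst this
      exact le_refl _
  
lemma succ_le_choose {j : ℕ} : ∀ r, 1 ≤ r → j + 1 ≤ (r + j).choose r := by
  intro r
  induction r with
  | zero => intro h; omega
  | succ r ih =>
    intro h
    rcases Nat.eq_or_lt_of_le h with h1 | h1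
    · have : r = 0 := by omega
      subst this
      simp [Nat.choose_one_right]
    · have hr : 1 ≤ r := by omega
      have e1 : r + 1 + j = (r + j) + 1 := by omega
      rw [e1, Nat.choose_succ_succ]
      exact le_trans (ih hr) (Nat.le_add_right _ _)


/-- `M` spans no copy from the family: the "good block" event. -/
def good (r n : ℕ) (Fam : ∀ k, Set (Finset (Finset (Fin k)))) (M : Finset (Fin n))
    (E : Finset (Finset (Fin n))) : Prop := ∀ U ⊆ M, ¬ HasCopyAt r n Fam E U

lemma copy_congr {r n : ℕ} {Fam : ∀ k, Set (Finset (Finset (Fin k)))} {M : Finset (Fin n)}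
    {E E' : Finset (Finset (Fin n))}
    (h : E ∩ M.powersetCard r = E' ∩ M.powersetCard r) {U : Finset (Fin n)} (hU : U ⊆ M) :
    HasCopyAt r n Fam E U → HasCopyAt r n Fam E' U := by
  rintro ⟨k, H, hH, f, him, hedge⟩
  refine ⟨k, H, hH, f, him, fun e he => ?_⟩
  have hmem : e.map f ∈ M.powersetCard r := by
    rw [Finset.mem_powersetCard]
    constructor
    · refine le_trans (Finset.map_subset_map.mpr (Finset.subset_univ e)) ?_
      rw [him]; exact hU
    · rw [Finset.card_map, he]
  have : e.map f ∈ E ↔ e.map f ∈ E' := by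
    constructor
    · intro hx
      have := Finset.mem_inter.mpr ⟨hx, hmem⟩
      rw [h] at this
      exact (Finset.mem_inter.mp this).1
    · intro hx
      have := Finset.mem_inter.mpr ⟨hx, hmem⟩
      rw [← h] at this
      exact (Finset.mem_inter.mp this).1
  rw [hedge e he, this]

lemma good_congr {r n : ℕ} {Fam : ∀ k, Set (Finset (Finset (Fin k)))} {M : Finset (Fin n)}
    {E E' : Finset (Finset (Fin n))}
    (h : E ∩ M.powersetCard r = E' ∩ M.powersetCard r) :
    good r n Fam M E ↔ good r n Fam M E' := by
  constructor <;> intro hg U hU hc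
  · exact hg U hU (copy_congr h.symm hU hc)
  · exact hg U hU (copy_congr h hU hc)

/-- The order-embedding of `Fin m` onto an `m`-subset `M` of `Fin n`. -/
noncomputable def vemb {n m : ℕ} (M : Finset (Fin n)) (hM : M.card = m) : Fin m ↪ Fin n :=
  (M.orderIsoOfFin hM).toEquiv.toEmbedding.trans (Function.Embedding.subtype _)

lemma vemb_mem {n m : ℕ} (M : Finset (Fin n)) (hM : M.card = m) (x : Fin m) :
    vemb M hM x ∈ M := by
  simp [vemb]

lemma vemb_image {n m : ℕ} (M : Finset (Fin n)) (hM : M.card = m) :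
    Finset.univ.map (vemb M hM) = M := by
  apply Finset.eq_of_subset_of_card_le
  · intro x hx
    simp only [Finset.mem_map] at hx
    obtain ⟨y, _, rfl⟩ := hx
    exact vemb_mem M hM y
  · rw [Finset.card_map, hM, Finset.card_univ, Fintype.card_fin]

/-- Transfer of the copy-freeness property along `vemb`. -/
lemma good_transfer {r m n : ℕ} (Fam : ∀ k, Set (Finset (Finset (Fin k))))
    (M : Finset (Fin n)) (hM : M.card = m) (E' : Finset (Finset (Fin m))) :
    good r n Fam M (E'.map (Finset.mapEmbedding (vemb M hM)).toEmbedding)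
      ↔ ∀ U', ¬ HasCopyAt r m Fam E' U' := by
  set g := vemb M hM with hg
  set eedge := (Finset.mapEmbedding g).toEmbedding with heedge
  have heapp : ∀ e : Finset (Fin m), eedge e = e.map g := fun e => by
    rw [heedge]; exact Finset.mapEmbedding_apply
  constructor
  · intro hgood U' hcopy
    obtain ⟨k, H, hH, f', him, hedge⟩ := hcopy
    refine hgood (U'.map g) ?_ ⟨k, H, hH, f'.trans g, ?_, fun e he => ?_⟩
    · rw [← vemb_image M hM, ← hg]
      exact Finset.map_subset_map.mpr (Finset.subset_univ U')
    · rw [← Finset.map_map, him]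
    · rw [hedge e he, ← Finset.map_map]
      rw [← heapp (e.map f')]
      exact (Finset.mem_map' eedge).symm
  · intro hforb U hU hcopy
    obtain ⟨k, H, hH, f, him, hedge⟩ := hcopy
    have hfM : ∀ x : Fin k, f x ∈ M := by
      intro x
      apply hU
      rw [← him]
      exact Finset.mem_map_of_mem f (Finset.mem_univ x)
    set f₀ : Fin k ↪ Fin m :=
      ⟨fun x => (M.orderIsoOfFin hM).symm ⟨f x, hfM x⟩, by
        intro x y hxy
        apply f.injective
        have := congrArg (M.orderIsoOfFin hM) hxy
        rw [OrderIso.apply_symm_apply, OrderIso.apply_symm_apply] at this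
        exact congrArg Subtype.val this⟩ with hf₀
    have hcomp : ∀ x : Fin k, g (f₀ x) = f x := by
      intro x
      simp [hg, vemb, hf₀]
      rw [← Finset.coe_orderIsoOfFin_apply]
      exact congrArg Subtype.val ((M.orderIsoOfFin hM).apply_symm_apply _)
    apply hforb (Finset.univ.map f₀)
    refine ⟨k, H, hH, f₀, rfl, fun e he => ?_⟩
    rw [hedge e he]
    have hfe : f = f₀.trans g := by
      ext x
      exact congrArg Fin.val (hcomp x).symm
    have : e.map f = eedge (e.map f₀) := by
      rw [heapp, Finset.map_map, hfe]
    rw [this]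
    exact Finset.mem_map' eedge



/-- Probability that a given `m`-set `M` is "good" equals `prG` of `Forb` on `m` vertices. -/
lemma block_prob {r m n : ℕ} (p : ℝ) (Fam : ∀ k, Set (Finset (Finset (Fin k))))
    (M : Finset (Fin n)) (hM : M.card = m) :
    ∑ E ∈ (edgeUniv r n).powerset, wt p (edgeUniv r n) E
        * (if good r n Fam M E then (1:ℝ) else 0)
      = prG r m p (ForbN r Fam m) := by
  have hS : M.powersetCard r ⊆ edgeUniv r n :=
    Finset.powersetCard_mono (Finset.subset_univ M)
  have hdep : ∀ E, (if good r n Fam M E then (1:ℝ) else 0)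
      = (if good r n Fam M (E ∩ M.powersetCard r) then (1:ℝ) else 0) := by
    intro E
    have h0 : good r n Fam M E ↔ good r n Fam M (E ∩ M.powersetCard r) :=
      good_congr (by rw [Finset.inter_assoc, Finset.inter_self])
    exact if_congr h0 rfl rfl
  have step1 : ∑ E ∈ (edgeUniv r n).powerset, wt p (edgeUniv r n) E
        * (if good r n Fam M E then (1:ℝ) else 0)
      = ∑ A ∈ (M.powersetCard r).powerset, wt p (M.powersetCard r) A
        * (if good r n Fam M A then (1:ℝ) else 0) := by
    rw [← sum_wt_restrict hS (fun A => if good r n Fam M A then (1:ℝ) else 0)]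
    exact Finset.sum_congr rfl fun E hE => by rw [hdep E]
  rw [step1, prG_eq]
  -- the edge-level embedding and its inverse
  set g := vemb M hM with hg
  set eedge := (Finset.mapEmbedding g).toEmbedding with heedge
  have heapp : ∀ e : Finset (Fin m), eedge e = e.map g := fun e => by
    rw [heedge]; exact Finset.mapEmbedding_apply
  set pedge : Finset (Fin n) → Finset (Fin m) :=
    fun e => e.preimage g (g.injective.injOn) with hpedge
  have fact2 : ∀ e' : Finset (Fin m), pedge (e'.map g) = e' := by
    intro e'
    ext x
    rw [hpedge]
    simp only [Finset.mem_preimage]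
    exact Finset.mem_map' g
  have fact1 : ∀ e ∈ M.powersetCard r, (pedge e).map g = e := by
    intro e he
    rw [Finset.mem_powersetCard] at he
    ext y
    simp only [Finset.mem_map, hpedge, Finset.mem_preimage]
    constructor
    · rintro ⟨x, hx, rfl⟩; exact hx
    · intro hy
      have : y ∈ Finset.univ.map g := by rw [hg, vemb_image]; exact he.1 hy
      obtain ⟨x, _, rfl⟩ := Finset.mem_map.mp this
      exact ⟨x, hy, rfl⟩
  have cardeq : (M.powersetCard r).card = (edgeUniv r m).card := by
    rw [Finset.card_powersetCard, hM, edgeUniv, Finset.card_powersetCard,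
      Finset.card_univ, Fintype.card_fin]
  refine Finset.sum_nbij' (fun A => A.image pedge) (fun E' => E'.map eedge) ?_ ?_ ?_ ?_ ?_
  · intro A hA
    rw [Finset.mem_powerset] at *
    intro e'' he''
    obtain ⟨e, he, rfl⟩ := Finset.mem_image.mp he''
    have heM := hA he
    rw [Finset.mem_powersetCard] at heM
    rw [edgeUniv, Finset.mem_powersetCard]
    refine ⟨Finset.subset_univ _, ?_⟩
    have : ((pedge e).map g).card = e.card := by rw [fact1 e (hA he)]
    rw [Finset.card_map] at this
    rw [this, heM.2]
  · intro E' hE'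
    rw [Finset.mem_powerset] at *
    intro e he
    obtain ⟨e', he', rfl⟩ := Finset.mem_map.mp he
    have := hE' he'
    rw [edgeUniv, Finset.mem_powersetCard] at this
    rw [Finset.mem_powersetCard, heapp]
    constructor
    · refine le_trans (Finset.map_subset_map.mpr (Finset.subset_univ e')) ?_
      rw [hg, vemb_image]
    · rw [Finset.card_map, this.2]
  · intro A hA
    rw [Finset.mem_powerset] at hA
    ext e
    simp only [Finset.mem_map, Finset.mem_image]
    constructor
    · rintro ⟨e'', ⟨e₀, he₀, rfl⟩, rfl⟩
      rw [heapp, fact1 e₀ (hA he₀)]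
      exact he₀
    · intro he
      exact ⟨pedge e, ⟨e, he, rfl⟩, by rw [heapp, fact1 e (hA he)]⟩
  · intro E' hE'
    ext e'
    simp only [Finset.mem_image, Finset.mem_map]
    constructor
    · rintro ⟨e, ⟨e₀, he₀, rfl⟩, rfl⟩
      rw [heapp, fact2 e₀]
      exact he₀
    · intro he'
      exact ⟨eedge e', ⟨e', he', rfl⟩, by rw [heapp, fact2 e']⟩
  · intro A hA
    rw [Finset.mem_powerset] at hA
    have hinj : Set.InjOn pedge A := by
      intro e₀ h₀ e₁ h₁ heq
      rw [← fact1 e₀ (hA h₀), ← fact1 e₁ (hA h₁), heq]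
    have hcardA : (A.image pedge).card = A.card := Finset.card_image_of_injOn hinj
    have hwteq : wt p (M.powersetCard r) A = wt p (edgeUniv r m) (A.image pedge) := by
      unfold wt
      rw [hcardA, cardeq]
    have hiff : (A.image pedge) ∈ ForbN r Fam m ↔ good r n Fam M A := by
      have hback : (A.image pedge).map eedge = A := by
        ext e
        simp only [Finset.mem_map, Finset.mem_image]
        constructor
        · rintro ⟨e'', ⟨e₀, he₀, rfl⟩, rfl⟩
          rw [heapp, fact1 e₀ (hA he₀)]
          exact he₀
        · intro he
          exact ⟨pedge e, ⟨e, he, rfl⟩, by rw [heapp, fact1 e (hA he)]⟩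
      have hRG : IsRGraph r m (A.image pedge) := by
        intro e'' he''
        obtain ⟨e, he, rfl⟩ := Finset.mem_image.mp he''
        have heM := hA he
        rw [Finset.mem_powersetCard] at heM
        rw [edgeUniv, Finset.mem_powersetCard]
        refine ⟨Finset.subset_univ _, ?_⟩
        have : ((pedge e).map g).card = e.card := by rw [fact1 e (hA he)]
        rw [Finset.card_map] at this
        rw [this, heM.2]
      constructor
      · intro hforb
        have := good_transfer (r := r) Fam M hM (A.image pedge)
        rw [hg] at heedge
        rw [← heedge, hback] at this
        exact this.mpr hforb.2
      · intro hgood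
        refine ⟨hRG, fun U' => ?_⟩
        have := good_transfer (r := r) Fam M hM (A.image pedge)
        rw [hg] at heedge
        rw [← heedge, hback] at this
        exact (this.mp hgood) U'
    by_cases hgd : good r n Fam M A
    · rw [if_pos hgd, if_pos (hiff.mpr hgd), hwteq, mul_one]
    · rw [if_neg hgd, if_neg (fun h => hgd (hiff.mp h)), mul_zero]



lemma copy_card {r n t : ℕ} {Fam : ∀ k, Set (Finset (Finset (Fin k)))}
    (hFam : ∀ k, ∀ H ∈ Fam k, IsRGraph r k H ∧ t ≤ k)
    {E : Finset (Finset (Fin n))} {U : Finset (Fin n)}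
    (h : HasCopyAt r n Fam E U) : t ≤ U.card := by
  obtain ⟨k, H, hH, f, him, _⟩ := h
  have : U.card = k := by
    rw [← him, Finset.card_map, Finset.card_univ, Fintype.card_fin]
  rw [this]
  exact (hFam k H hH).2

/-- Each copy spoils at most `C(n-t, m-t)` blocks. -/
lemma bad_count {r n m t : ℕ} {Fam : ∀ k, Set (Finset (Finset (Fin k)))}
    (hFam : ∀ k, ∀ H ∈ Fam k, IsRGraph r k H ∧ t ≤ k) (htm : t ≤ m) (hmn : m ≤ n)
    (E : Finset (Finset (Fin n))) :
    (((Finset.powersetCard m (Finset.univ : Finset (Fin n))).filter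
        (fun M => ¬ good r n Fam M E)).card : ℝ)
      ≤ (Set.ncard {U : Finset (Fin n) | HasCopyAt r n Fam E U} : ℝ)
        * ((n - t).choose (m - t) : ℝ) := by
  set Cset := {U : Finset (Fin n) | HasCopyAt r n Fam E U} with hCset
  have hfin : Cset.Finite := Set.toFinite _
  set CF := hfin.toFinset with hCF
  have hsub : (Finset.powersetCard m (Finset.univ : Finset (Fin n))).filter
        (fun M => ¬ good r n Fam M E)
      ⊆ CF.biUnion (fun U => (Finset.powersetCard m (Finset.univ : Finset (Fin n))).filter
        (fun M => U ⊆ M)) := by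
    intro M hM
    rw [Finset.mem_filter] at hM
    obtain ⟨hM1, hM2⟩ := hM
    rw [good] at hM2
    push_neg at hM2
    obtain ⟨U, hUM, hcopy⟩ := hM2
    rw [Finset.mem_biUnion]
    refine ⟨U, ?_, ?_⟩
    · rw [hCF, Set.Finite.mem_toFinset]; exact hcopy
    · rw [Finset.mem_filter]; exact ⟨hM1, hUM⟩
  have hcard1 := Finset.card_le_card hsub
  have hcard2 := Finset.card_biUnion_le (s := CF)
      (t := fun U => (Finset.powersetCard m (Finset.univ : Finset (Fin n))).filter
        (fun M => U ⊆ M))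
  have hper : ∀ U ∈ CF, ((Finset.powersetCard m (Finset.univ : Finset (Fin n))).filter
        (fun M => U ⊆ M)).card ≤ (n - t).choose (m - t) := by
    intro U hU
    rw [hCF, Set.Finite.mem_toFinset] at hU
    have htU : t ≤ U.card := copy_card hFam hU
    by_cases hUm : U.card ≤ m
    · rw [card_supersets U hUm]
      exact choose_sub_le_choose_sub hmn U.card htU hUm
    · have : (Finset.powersetCard m (Finset.univ : Finset (Fin n))).filter
          (fun M => U ⊆ M) = ∅ := by
        apply Finset.filter_false_of_mem
        intro M hM
        rw [Finset.mem_powersetCard] at hM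
        intro hUM
        exact hUm (hM.2 ▸ Finset.card_le_card hUM)
      rw [this]
      simp
  have hsum : ∑ U ∈ CF, ((Finset.powersetCard m (Finset.univ : Finset (Fin n))).filter
        (fun M => U ⊆ M)).card ≤ CF.card * ((n - t).choose (m - t)) := by
    calc ∑ U ∈ CF, ((Finset.powersetCard m (Finset.univ : Finset (Fin n))).filter
          (fun M => U ⊆ M)).card
        ≤ ∑ _U ∈ CF, (n - t).choose (m - t) := Finset.sum_le_sum hper
      _ = CF.card * ((n - t).choose (m - t)) := by rw [Finset.sum_const, smul_eq_mul]
  have hncard : Cset.ncard = CF.card := Set.ncard_eq_toFinset_card _ hfin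
  have : (((Finset.powersetCard m (Finset.univ : Finset (Fin n))).filter
      (fun M => ¬ good r n Fam M E)).card : ℕ) ≤ CF.card * ((n - t).choose (m - t)) :=
    le_trans hcard1 (le_trans hcard2 hsum)
  calc (((Finset.powersetCard m (Finset.univ : Finset (Fin n))).filter
      (fun M => ¬ good r n Fam M E)).card : ℝ)
      ≤ ((CF.card * ((n - t).choose (m - t)) : ℕ) : ℝ) := by exact_mod_cast this
    _ = (Cset.ncard : ℝ) * ((n - t).choose (m - t) : ℝ) := by
        rw [hncard]; push_cast; ring



lemma choose_lb {t K n : ℕ} (htK : t ≤ K) (hn : 2 * K + 2 ≤ n) :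
    (n:ℝ) ^ t / (2 ^ t * (K.factorial : ℝ)) ≤ (n.choose K : ℝ) := by
  have h1 : (((n + 1 - K : ℕ) : ℝ)) ^ K / (K.factorial : ℝ) ≤ (n.choose K : ℝ) :=
    Nat.pow_le_choose K n
  have hKn1 : K ≤ n + 1 := by omega
  have h2 : (n:ℝ) / 2 ≤ ((n + 1 - K : ℕ) : ℝ) := by
    have hnat : n ≤ 2 * (n + 1 - K) := by omega
    have := (Nat.cast_le (α := ℝ)).mpr hnat
    push_cast at this
    linarith
  have hn2 : (1:ℝ) ≤ (n:ℝ) / 2 := by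
    have : (2:ℝ) ≤ (n:ℝ) := by exact_mod_cast (by omega : 2 ≤ n)
    linarith
  have h3 : ((n:ℝ)/2) ^ t ≤ ((n:ℝ)/2) ^ K := pow_le_pow_right₀ hn2 htK
  have h4 : ((n:ℝ)/2) ^ K ≤ (((n + 1 - K : ℕ) : ℝ)) ^ K :=
    pow_le_pow_left₀ (by linarith) h2 K
  have hfac : (0:ℝ) < (K.factorial : ℝ) := by exact_mod_cast K.factorial_pos
  calc (n:ℝ) ^ t / (2 ^ t * (K.factorial : ℝ)) = ((n:ℝ)/2) ^ t / (K.factorial : ℝ) := by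
        rw [div_pow]; ring
    _ ≤ ((n:ℝ)/2) ^ K / (K.factorial : ℝ) := by
        gcongr
    _ ≤ (((n + 1 - K : ℕ) : ℝ)) ^ K / (K.factorial : ℝ) := by
        gcongr
    _ ≤ (n.choose K : ℝ) := h1


end SuperMain

set_option maxHeartbeats 4000000

/-- **Supersaturation, probabilistic form.** With `c = c(p,Fam)` as above, for every
`ε > 0` there are `n₀` and `δ > 0` such that for `n > n₀` the probability that `G(n,p)`
contains fewer than `δ n^t` induced subgraphs lying in `Fam` is at most
`2 ^ ((-c+ε) C(n,r))`. -/
theorem stmt_3 (r t : ℕ) (Fam : ∀ k, Set (Finset (Finset (Fin k))))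
    (hFam : ∀ k, ∀ H ∈ Fam k, IsRGraph r k H ∧ t ≤ k)
    (p : ℝ) (hp0 : 0 < p) (hp1 : p < 1) (c : ℝ)
    (hc : Filter.Tendsto
      (fun n => -(Real.logb 2 (prG r n p (ForbN r Fam n))) / (n.choose r : ℝ))
      Filter.atTop (nhds c))
    (ε : ℝ) (hε : 0 < ε) :
    ∃ (n₀ : ℕ) (δ : ℝ), 0 < δ ∧ ∀ n, n₀ < n →
      prG r n p {G : Finset (Finset (Fin n)) |
          (Set.ncard {U : Finset (Fin n) | HasCopyAt r n Fam G U} : ℝ) < δ * (n : ℝ) ^ t} ≤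
        2 ^ ((-c + ε) * (n.choose r : ℝ)) := by
  classical
  by_cases hcε : c ≤ ε
  · refine ⟨1, 1, one_pos, fun n hn => ?_⟩
    refine le_trans (SuperMain.prG_le_sum hp0.le hp1.le _) ?_
    have h0 : (0:ℝ) ≤ (-c + ε) * (n.choose r : ℝ) :=
      mul_nonneg (by linarith) (Nat.cast_nonneg _)
    exact Real.one_le_rpow one_le_two h0
  push_neg at hcε
  have hc0 : 0 < c := lt_trans hε hcε
  rcases Nat.eq_zero_or_pos r with hr0 | hrpos
  · -- degenerate case r = 0
    subst hr0
    obtain ⟨n₁, hn₁⟩ := Metric.tendsto_atTop.mp hc ε hε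
    set P : Bool → ℕ → Prop := fun b k => ∃ H ∈ Fam k, ((∅ ∈ H) ↔ b = true) with hPdef
    set kb : Bool → ℕ := fun b => if hb : ∃ k, P b k then Nat.find hb else 0 with hkb
    have htkb : ∀ b, (∃ k, P b k) → t ≤ kb b := by
      intro b hb
      rw [hkb]; simp only [dif_pos hb]
      obtain ⟨H, hH, _⟩ := Nat.find_spec hb
      exact (hFam _ H hH).2
    set δ0 : ℝ := min (1 / (2^t * ((kb true).factorial : ℝ)))
        (1 / (2^t * ((kb false).factorial : ℝ))) with hδ0
    have hδ0pos : 0 < δ0 := lt_min (by positivity) (by positivity)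
    refine ⟨max n₁ (max (2 * kb true + 2) (2 * kb false + 2)), δ0, hδ0pos, fun n hn => ?_⟩
    have hn₁' : n₁ ≤ n := le_of_lt (lt_of_le_of_lt (le_max_left _ _) hn)
    have hntrue : 2 * kb true + 2 ≤ n :=
      le_of_lt (lt_of_le_of_lt (le_trans (le_max_left _ _) (le_max_right _ _)) hn)
    have hnfalse : 2 * kb false + 2 ≤ n :=
      le_of_lt (lt_of_le_of_lt (le_trans (le_max_right _ _) (le_max_right _ _)) hn)
    have hBF : ∀ E ∈ (edgeUniv 0 n).powerset,
        E ∈ {G : Finset (Finset (Fin n)) |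
          (Set.ncard {U : Finset (Fin n) | HasCopyAt 0 n Fam G U} : ℝ) < δ0 * (n:ℝ) ^ t}
          → E ∈ ForbN 0 Fam n := by
      intro E hE hEB
      rw [Set.mem_setOf_eq] at hEB
      refine ⟨Finset.mem_powerset.mp hE, fun U hU => ?_⟩
      obtain ⟨k, H, hH, f, him, hedge⟩ := hU
      set b : Bool := decide (∅ ∈ E) with hb
      have hPbk : P b k := by
        refine ⟨H, hH, ?_⟩
        have hcard0 : (∅ : Finset (Fin k)).card = 0 := rfl
        have hiff := hedge ∅ hcard0
        rw [Finset.map_empty] at hiff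
        rw [hiff, hb]
        simp
      have hbex : ∃ k', P b k' := ⟨k, hPbk⟩
      have hkbeq : kb b = Nat.find hbex := by rw [hkb]; simp only [dif_pos hbex]
      have hkble : kb b ≤ k := by rw [hkbeq]; exact Nat.find_min' hbex hPbk
      have hUk : U.card = k := by
        rw [← him, Finset.card_map, Finset.card_univ, Fintype.card_fin]
      have hkn : k ≤ n := by
        rw [← hUk]
        exact le_trans (Finset.card_le_univ U) (le_of_eq (by simp))
      obtain ⟨H', hH', hpar⟩ : P b (kb b) := by rw [hkbeq]; exact Nat.find_spec hbex
      have hall : ∀ U' ∈ Finset.powersetCard (kb b) (Finset.univ : Finset (Fin n)),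
          HasCopyAt 0 n Fam E U' := by
        intro U' hU'
        rw [Finset.mem_powersetCard] at hU'
        refine ⟨kb b, H', hH', SuperMain.vemb U' hU'.2, SuperMain.vemb_image U' hU'.2,
          fun e he => ?_⟩
        have he' : e = ∅ := Finset.card_eq_zero.mp he
        subst he'
        rw [Finset.map_empty, hpar, hb]
        simp
      have hsub : ↑(Finset.powersetCard (kb b) (Finset.univ : Finset (Fin n)))
          ⊆ {U : Finset (Fin n) | HasCopyAt 0 n Fam E U} := fun U' hU' => hall U' hU'
      have hge : ((n.choose (kb b)) : ℝ)
          ≤ (Set.ncard {U : Finset (Fin n) | HasCopyAt 0 n Fam E U} : ℝ) := by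
        have h1 := Set.ncard_le_ncard hsub (Set.toFinite _)
        rw [Set.ncard_coe_finset, Finset.card_powersetCard, Finset.card_univ,
          Fintype.card_fin] at h1
        exact_mod_cast h1
      have hnb : 2 * kb b + 2 ≤ n := by
        cases b
        · exact hnfalse
        · exact hntrue
      have harith : δ0 * (n:ℝ) ^ t ≤ ((n.choose (kb b)) : ℝ) := by
        have ht' : t ≤ kb b := htkb b hbex
        refine le_trans ?_ (SuperMain.choose_lb ht' hnb)
        have hδle : δ0 ≤ 1 / (2^t * ((kb b).factorial : ℝ)) := by
          rw [hδ0]; cases b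
          · exact min_le_right _ _
          · exact min_le_left _ _
        have hnt : (0:ℝ) ≤ (n:ℝ) ^ t := by positivity
        calc δ0 * (n:ℝ) ^ t ≤ (1 / (2^t * ((kb b).factorial : ℝ))) * (n:ℝ) ^ t :=
              mul_le_mul_of_nonneg_right hδle hnt
          _ = (n:ℝ) ^ t / (2^t * ((kb b).factorial : ℝ)) := by ring
      linarith
    refine le_trans (SuperMain.prG_mono_mem hp0.le hp1.le hBF) ?_
    have hclose := hn₁ n hn₁'
    rw [Real.dist_eq] at hclose
    set qn := prG 0 n p (ForbN 0 Fam n) with hqn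
    have hqn0 : 0 ≤ qn := SuperMain.prG_nonneg hp0.le hp1.le _
    rcases eq_or_lt_of_le hqn0 with hq | hq
    · rw [← hq]
      exact le_of_lt (Real.rpow_pos_of_pos two_pos _)
    · have hlogb : qn = 2 ^ (Real.logb 2 qn) := (Real.rpow_logb two_pos (by norm_num) hq).symm
      nth_rewrite 1 [hlogb]
      apply Real.rpow_le_rpow_of_exponent_le one_le_two
      have hch : ((n.choose 0 : ℕ) : ℝ) = 1 := by rw [Nat.choose_zero_right]; norm_num
      rw [hch, mul_one]
      rw [hch, div_one] at hclose
      have := abs_lt.mp hclose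
      linarith [this.1]
  · -- main case r ≥ 1
    set ε₀ : ℝ := min 1 (ε/4) with hε₀
    have hε₀pos : 0 < ε₀ := lt_min one_pos (by linarith)
    have hε₀le : ε₀ ≤ ε/4 := min_le_right _ _
    have hε₀le1 : ε₀ ≤ 1 := min_le_left _ _
    obtain ⟨m₀, hm₀⟩ := Metric.tendsto_atTop.mp hc ε₀ hε₀pos
    set m : ℕ := m₀ + t + r + ⌈(4:ℝ)/ε⌉₊ + 1 with hm
    have hmm₀ : m₀ ≤ m := by omega
    have htm : t ≤ m := by omega
    have hrm : r ≤ m := by omega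
    have hKb : (4:ℝ)/ε ≤ (m.choose r : ℝ) := by
      have h1 : (m - r) + 1 ≤ m.choose r := by
        have h := SuperMain.succ_le_choose (j := m - r) r hrpos
        rwa [Nat.add_sub_cancel' hrm] at h
      have h2 : (4:ℝ)/ε ≤ (⌈(4:ℝ)/ε⌉₊ : ℝ) := Nat.le_ceil _
      calc (4:ℝ)/ε ≤ (⌈(4:ℝ)/ε⌉₊ : ℝ) := h2
        _ ≤ (((m - r) + 1 : ℕ) : ℝ) := by exact_mod_cast (by omega : ⌈(4:ℝ)/ε⌉₊ ≤ (m - r) + 1)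
        _ ≤ (m.choose r : ℝ) := by exact_mod_cast h1
    set K' : ℝ := (m.choose r : ℝ) with hK'
    have hK'pos : 0 < K' := by
      have h4ε : (0:ℝ) < 4/ε := by positivity
      linarith
    set Q : ℝ := prG r m p (ForbN r Fam m) with hQ
    have hQ0 : 0 ≤ Q := SuperMain.prG_nonneg hp0.le hp1.le _
    have hQ1 : Q ≤ 1 := SuperMain.prG_le_sum hp0.le hp1.le _
    have hcmdist := hm₀ m hmm₀
    rw [Real.dist_eq] at hcmdist
    set cm : ℝ := -(Real.logb 2 Q) / K' with hcmdef
    have hcmc : |cm - c| < ε₀ := hcmdist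
    have hQpos : 0 < Q := by
      rcases eq_or_lt_of_le hQ0 with h | h
      · exfalso
        have hlogb0 : Real.logb 2 Q = 0 := by rw [← h]; simp [Real.logb]
        have : cm = 0 := by rw [hcmdef, hlogb0]; simp
        rw [this] at hcmc
        have := abs_lt.mp hcmc
        have : c < ε₀ := by linarith [this.2]
        have : c < ε := by
          calc c < ε₀ := this
            _ ≤ ε/4 := hε₀le
            _ < ε := by linarith
        linarith
      · exact h
    have hcmlb : c - ε₀ < cm := by have := abs_lt.mp hcmc; linarith [this.1]
    have hcmub : cm < c + ε₀ := by have := abs_lt.mp hcmc; linarith [this.2]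
    set η : ℝ := ε/(4*(c+1)) with hη
    have hc1pos : (0:ℝ) < c + 1 := by linarith
    have hηpos : 0 < η := by positivity
    have hηc1 : η * (c+1) = ε/4 := by rw [hη]; field_simp
    have hη1 : η < 1 := by
      rw [hη, div_lt_one (by positivity)]
      linarith
    have hmtpos : (0:ℝ) < (m.choose t : ℝ) := by
      exact_mod_cast Nat.choose_pos htm
    set D : ℝ := 2^t * (t.factorial : ℝ) * (m.choose t : ℝ) with hD
    have hDpos : 0 < D := by
      have : (0:ℝ) < (t.factorial : ℝ) := by exact_mod_cast t.factorial_pos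
      positivity
    set δ : ℝ := η / D with hδ
    have hδpos : 0 < δ := by positivity
    refine ⟨max m (2*t + 2), δ, hδpos, fun n hn => ?_⟩
    have hmn : m ≤ n := le_of_lt (lt_of_le_of_lt (le_max_left _ _) hn)
    have h2t : 2*t + 2 ≤ n := le_of_lt (lt_of_le_of_lt (le_max_right _ _) hn)
    have hrn : r ≤ n := le_trans hrm hmn
    set 𝔐 := Finset.powersetCard m (Finset.univ : Finset (Fin n)) with h𝔐
    set N : ℕ := 𝔐.card with hN
    have hNval : N = n.choose m := by
      rw [hN, h𝔐, Finset.card_powersetCard, Finset.card_univ, Fintype.card_fin]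
    set q : ℕ := (n - r).choose (m - r) with hq
    have hqpos : 0 < q := Nat.choose_pos (by omega)
    set θ : ℝ := Q ^ (-((q:ℝ)⁻¹)) with hθ
    have hθ1 : 1 ≤ θ :=
      Real.one_le_rpow_of_pos_of_le_one_of_nonpos hQpos hQ1
        (by simp only [neg_nonpos]; positivity)
    have hθ0 : 0 < θ := lt_of_lt_of_le one_pos hθ1
    set I := edgeUniv r n with hI
    set f : Finset (Fin n) → Finset (Finset (Fin n)) → ℝ :=
      fun M E => if SuperMain.good r n Fam M E then θ else 1 with hf
    have hθq : θ ^ q = Q⁻¹ := by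
      rw [hθ, ← Real.rpow_natCast (Q ^ (-((q:ℝ)⁻¹))) q, ← Real.rpow_mul hQ0]
      have hexp : (-((q:ℝ)⁻¹)) * (q:ℝ) = -1 := by
        field_simp
      rw [hexp, Real.rpow_neg_one]
    have hT : ∀ M ∈ 𝔐, ∑ E ∈ I.powerset, SuperAux.wt p I E * (f M E) ^ q = 2 - Q := by
      intro M hM
      have hMcard : M.card = m := (Finset.mem_powersetCard.mp hM).2
      have hsplit : ∀ E, (f M E)^q
          = 1 + (Q⁻¹ - 1) * (if SuperMain.good r n Fam M E then (1:ℝ) else 0) := by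
        intro E
        rw [hf]
        by_cases hg : SuperMain.good r n Fam M E
        · simp only [if_pos hg, hθq]; ring
        · simp only [if_neg hg, one_pow]; ring
      have hQinv : (Q⁻¹ - 1) * Q = 1 - Q := by field_simp
      calc ∑ E ∈ I.powerset, SuperAux.wt p I E * (f M E)^q
          = ∑ E ∈ I.powerset, (SuperAux.wt p I E + (Q⁻¹ - 1) * (SuperAux.wt p I E
              * (if SuperMain.good r n Fam M E then (1:ℝ) else 0))) := by
            refine Finset.sum_congr rfl fun E hE => ?_
            rw [hsplit E]; ring
        _ = (∑ E ∈ I.powerset, SuperAux.wt p I E) + (Q⁻¹ - 1) * ∑ E ∈ I.powerset,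
              SuperAux.wt p I E * (if SuperMain.good r n Fam M E then (1:ℝ) else 0) := by
            rw [Finset.sum_add_distrib, Finset.mul_sum]
        _ = 1 + (Q⁻¹ - 1) * Q := by
            rw [SuperAux.sum_wt, hI, SuperMain.block_prob p Fam M hMcard, ← hQ]
        _ = 2 - Q := by rw [hQinv]; ring
    have hdep : ∀ M ∈ 𝔐, ∀ A ⊆ I, ∀ B ⊆ I,
        A ∩ (M.powersetCard r) = B ∩ (M.powersetCard r) → f M A = f M B := by
      intro M hM A hA B hB hAB
      rw [hf]
      exact if_congr (SuperMain.good_congr hAB) rfl rfl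
    have hfnn : ∀ M ∈ 𝔐, ∀ A, 0 ≤ f M A := by
      intro M hM A
      by_cases hg : SuperMain.good r n Fam M A
      · have : f M A = θ := by simp only [hf, if_pos hg]
        rw [this]; linarith
      · have : f M A = 1 := by simp only [hf, if_neg hg]
        rw [this]; exact zero_le_one
    have hdeg : ∀ e : Finset (Fin n), (𝔐.filter (fun M => e ∈ M.powersetCard r)).card ≤ q := by
      intro e
      by_cases hcr : e.card = r
      · have heq : 𝔐.filter (fun M => e ∈ M.powersetCard r) = 𝔐.filter (fun M => e ⊆ M) := by
          apply Finset.filter_congr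
          intro M hM
          rw [Finset.mem_powersetCard]
          simp [hcr]
        rw [heq, h𝔐, SuperMain.card_supersets e (by omega : e.card ≤ m), hcr]
      · have heq : 𝔐.filter (fun M => e ∈ M.powersetCard r) = ∅ := by
          apply Finset.filter_false_of_mem
          intro M hM hmem
          exact hcr (Finset.mem_powersetCard.mp hmem).2
        rw [heq]
        simp
    have hfinner := SuperAux.finner hp0.le hp1.le q hqpos I 𝔐
        (fun M => M.powersetCard r) f hdep hfnn hdeg
    -- arithmetic: each copy spoils few blocks
    have hchooseid : ((n.choose m : ℕ) : ℝ) * ((m.choose t : ℕ) : ℝ)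
        = ((n.choose t : ℕ) : ℝ) * (((n - t).choose (m - t) : ℕ) : ℝ) := by
      exact_mod_cast congrArg (Nat.cast (R := ℝ)) (Nat.choose_mul (n := n) htm)
    have hnt_lb : (n:ℝ)^t ≤ 2^t * (t.factorial : ℝ) * ((n.choose t : ℕ) : ℝ) := by
      have h := SuperMain.choose_lb (le_refl t) h2t
      rw [div_le_iff₀ (by positivity)] at h
      linarith
    have hXnn : (0:ℝ) ≤ (((n - t).choose (m - t) : ℕ) : ℝ) := Nat.cast_nonneg _
    have harith : δ * (n:ℝ)^t * (((n - t).choose (m - t) : ℕ) : ℝ) ≤ η * (N:ℝ) := by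
      have key : (n:ℝ)^t * (((n - t).choose (m - t) : ℕ) : ℝ)
          ≤ D * ((n.choose m : ℕ) : ℝ) := by
        have h1 : (n:ℝ)^t * (((n - t).choose (m - t) : ℕ) : ℝ)
            ≤ (2^t * (t.factorial : ℝ) * ((n.choose t : ℕ) : ℝ))
              * (((n - t).choose (m - t) : ℕ) : ℝ) :=
          mul_le_mul_of_nonneg_right hnt_lb hXnn
        have h2 : (2^t * (t.factorial : ℝ) * ((n.choose t : ℕ) : ℝ))
            * (((n - t).choose (m - t) : ℕ) : ℝ) = D * ((n.choose m : ℕ) : ℝ) := by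
          rw [hD]
          linear_combination (2^t * (t.factorial : ℝ)) * hchooseid.symm
        linarith
      have hη0 : 0 ≤ η / D := le_of_lt (by positivity)
      calc δ * (n:ℝ)^t * (((n - t).choose (m - t) : ℕ) : ℝ)
          = (η / D) * ((n:ℝ)^t * (((n - t).choose (m - t) : ℕ) : ℝ)) := by rw [hδ]; ring
        _ ≤ (η / D) * (D * ((n.choose m : ℕ) : ℝ)) := mul_le_mul_of_nonneg_left key hη0
        _ = η * ((n.choose m : ℕ) : ℝ) := by field_simp
        _ = η * (N:ℝ) := by rw [hNval]
    -- pointwise domination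
    set u : ℝ := (1 - η) * (N:ℝ) with hu
    set Bset : Set (Finset (Finset (Fin n))) := {G : Finset (Finset (Fin n)) |
        (Set.ncard {U : Finset (Fin n) | HasCopyAt r n Fam G U} : ℝ) < δ * (n:ℝ) ^ t} with hBset
    have hgoodprod : ∀ E, ∏ M ∈ 𝔐, f M E
        = θ ^ ((𝔐.filter (fun M => SuperMain.good r n Fam M E)).card) := by
      intro E
      rw [hf]
      rw [Finset.prod_ite, Finset.prod_const, Finset.prod_const, one_pow, mul_one]
    have hpoint : ∀ E ∈ I.powerset, (if E ∈ Bset then SuperAux.wt p I E else 0)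
        ≤ SuperAux.wt p I E * (θ ^ (-u) * ∏ M ∈ 𝔐, f M E) := by
      intro E hE
      by_cases hEB : E ∈ Bset
      · rw [if_pos hEB]
        have hwtnn := SuperAux.wt_nonneg hp0.le hp1.le I E
        have hcount : u ≤ ((𝔐.filter (fun M => SuperMain.good r n Fam M E)).card : ℝ) := by
          have hbadle := SuperMain.bad_count hFam htm hmn E
          have hEB' : (Set.ncard {U : Finset (Fin n) | HasCopyAt r n Fam E U} : ℝ)
              < δ * (n:ℝ)^t := hEB
          have hbad2 : (((𝔐.filter (fun M => ¬ SuperMain.good r n Fam M E)).card : ℕ) : ℝ)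
              ≤ η * (N:ℝ) := by
            refine le_trans hbadle (le_trans ?_ harith)
            have := mul_le_mul_of_nonneg_right (le_of_lt hEB') hXnn
            linarith
          have hsplitc := Finset.card_filter_add_card_filter_not
            (s := 𝔐) (p := fun M => SuperMain.good r n Fam M E)
          have : ((𝔐.filter (fun M => SuperMain.good r n Fam M E)).card : ℝ)
              + ((𝔐.filter (fun M => ¬ SuperMain.good r n Fam M E)).card : ℝ) = (N:ℝ) := by
            exact_mod_cast congrArg (Nat.cast (R := ℝ)) hsplitc
          rw [hu]
          linarith [hbad2, this]
        have hone : (1:ℝ) ≤ θ ^ (-u) * ∏ M ∈ 𝔐, f M E := by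
          rw [hgoodprod E]
          rw [← Real.rpow_natCast θ ((𝔐.filter (fun M => SuperMain.good r n Fam M E)).card),
            ← Real.rpow_add hθ0]
          have h0le : (0:ℝ) ≤ -u + ((𝔐.filter (fun M => SuperMain.good r n Fam M E)).card : ℝ) := by
            linarith
          calc (1:ℝ) = θ ^ (0:ℝ) := by rw [Real.rpow_zero]
            _ ≤ θ ^ (-u + ((𝔐.filter (fun M => SuperMain.good r n Fam M E)).card : ℝ)) :=
              Real.rpow_le_rpow_of_exponent_le hθ1 h0le
        calc SuperAux.wt p I E = SuperAux.wt p I E * 1 := by ring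
          _ ≤ SuperAux.wt p I E * (θ ^ (-u) * ∏ M ∈ 𝔐, f M E) :=
            mul_le_mul_of_nonneg_left hone hwtnn
      · rw [if_neg hEB]
        have hwtnn := SuperAux.wt_nonneg hp0.le hp1.le I E
        have hfpos : 0 ≤ ∏ M ∈ 𝔐, f M E := Finset.prod_nonneg fun M hM => hfnn M hM E
        positivity
    -- assemble
    have hsum1 : prG r n p Bset ≤ θ ^ (-u) * ∑ E ∈ I.powerset,
        SuperAux.wt p I E * ∏ M ∈ 𝔐, f M E := by
      rw [SuperMain.prG_eq]
      calc ∑ E ∈ (edgeUniv r n).powerset,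
            (if E ∈ Bset then SuperAux.wt p (edgeUniv r n) E else 0)
          ≤ ∑ E ∈ I.powerset, SuperAux.wt p I E * (θ ^ (-u) * ∏ M ∈ 𝔐, f M E) :=
            Finset.sum_le_sum hpoint
        _ = θ ^ (-u) * ∑ E ∈ I.powerset, SuperAux.wt p I E * ∏ M ∈ 𝔐, f M E := by
            rw [Finset.mul_sum]
            exact Finset.sum_congr rfl fun E hE => by ring
    have hprod : ∏ M ∈ 𝔐, (∑ E ∈ I.powerset, SuperAux.wt p I E * (f M E) ^ q) ^ ((q:ℝ)⁻¹)
        = ((2 - Q) ^ ((q:ℝ)⁻¹)) ^ N := by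
      rw [Finset.prod_congr rfl (fun M hM => by rw [hT M hM]), Finset.prod_const, hN]
    have h2Qnn : (0:ℝ) ≤ 2 - Q := by linarith
    have hstep : prG r n p Bset ≤ θ ^ (-u) * ((2:ℝ) ^ ((q:ℝ)⁻¹)) ^ N := by
      refine le_trans hsum1 ?_
      have hθunn : (0:ℝ) ≤ θ ^ (-u) := le_of_lt (Real.rpow_pos_of_pos hθ0 _)
      refine mul_le_mul_of_nonneg_left ?_ hθunn
      refine le_trans hfinner ?_
      rw [hprod]
      refine pow_le_pow_left₀ (Real.rpow_nonneg h2Qnn _) ?_ N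
      exact Real.rpow_le_rpow h2Qnn (by linarith) (by positivity)
    -- convert to powers of two
    have hlogbQ : Real.logb 2 Q = -cm * K' := by
      rw [hcmdef]
      field_simp
    have hθu : θ ^ (-u) = (2:ℝ) ^ ((-cm * K') * ((q:ℝ)⁻¹ * u)) := by
      rw [hθ, ← Real.rpow_mul hQ0]
      have : (-((q:ℝ)⁻¹)) * (-u) = (q:ℝ)⁻¹ * u := by ring
      rw [this]
      rw [← Real.rpow_logb two_pos (by norm_num) hQpos, ← Real.rpow_mul (by norm_num : (0:ℝ) ≤ 2)]
      rw [hlogbQ]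
    have h2N : ((2:ℝ) ^ ((q:ℝ)⁻¹)) ^ N = (2:ℝ) ^ ((q:ℝ)⁻¹ * (N:ℝ)) := by
      rw [← Real.rpow_natCast ((2:ℝ) ^ ((q:ℝ)⁻¹)) N, ← Real.rpow_mul (by norm_num : (0:ℝ) ≤ 2)]
    have hfinal : prG r n p Bset ≤ (2:ℝ) ^ ((-cm * K') * ((q:ℝ)⁻¹ * u) + (q:ℝ)⁻¹ * (N:ℝ)) := by
      rw [Real.rpow_add two_pos, ← hθu, ← h2N]
      exact hstep
    refine le_trans hfinal ?_
    apply Real.rpow_le_rpow_of_exponent_le one_le_two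
    have hqq : (0:ℝ) < (q:ℝ) := by exact_mod_cast hqpos
    have hNK : (N:ℝ) * K' = ((n.choose r : ℕ) : ℝ) * (q:ℝ) := by
      rw [hNval, hK', hq]
      exact_mod_cast congrArg (Nat.cast (R := ℝ)) (Nat.choose_mul (n := n) hrm)
    set L : ℝ := ((n.choose r : ℕ) : ℝ) with hL
    have hLnn : 0 ≤ L := Nat.cast_nonneg _
    have hNq : (q:ℝ)⁻¹ * (N:ℝ) = L / K' := by
      rw [inv_mul_eq_div, div_eq_div_iff (ne_of_gt hqq) (ne_of_gt hK'pos)]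
      linarith [hNK]
    have hexpeq : (-cm * K') * ((q:ℝ)⁻¹ * u) + (q:ℝ)⁻¹ * (N:ℝ)
        = L * ((1:ℝ)/K' - (1 - η) * cm) := by
      rw [hu]
      have h1 : (q:ℝ)⁻¹ * ((1 - η) * (N:ℝ)) = (1-η) * (L/K') := by
        rw [← hNq]; ring
      calc (-cm * K') * ((q:ℝ)⁻¹ * ((1 - η) * (N:ℝ))) + (q:ℝ)⁻¹ * (N:ℝ)
          = (-cm * K') * ((1-η) * (L/K')) + L/K' := by rw [h1, hNq]
        _ = L * ((1:ℝ)/K' - (1 - η) * cm) := by field_simp; ring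
    rw [hexpeq]
    have hKinv : (1:ℝ)/K' ≤ ε/4 := by
      calc (1:ℝ)/K' ≤ 1/((4:ℝ)/ε) := one_div_le_one_div_of_le (by positivity) hKb
        _ = ε/4 := by field_simp
    have hcmub' : cm ≤ c + 1 := by linarith
    have hηcm : η * cm ≤ ε/4 := by
      have h := mul_le_mul_of_nonneg_left hcmub' (le_of_lt hηpos)
      linarith [hηc1]
    have hcmlb' : c - ε/4 ≤ cm := by linarith [hε₀le]
    have hfinalexp : (1:ℝ)/K' - (1 - η) * cm ≤ -c + ε := by
      have hexpand : (1 - η) * cm = cm - η * cm := by ring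
      linarith [hKinv, hηcm, hcmlb']
    calc L * ((1:ℝ)/K' - (1 - η) * cm) ≤ L * (-c + ε) :=
          mul_le_mul_of_nonneg_left hfinalexp hLnn
      _ = (-c + ε) * L := by ring
end
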